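/- arXiv:2508.06331 — 5 statements merged into one kernel-verified Lean document; each statement's English description precedes it below -/
import Mathlib

section
/- Exponential decay of the K-Bessel function of imaginary order beyond the transition range: there exists an absolute constant C such that for all real t ≥ 2 and all u ≥ 2t, cosh(πt/2) |K_{it}(u)| ≤ C e^{-u/5}. -/
open Real Complex

/-- The modified Bessel function of the second kind `K_ν(u)`, defined for `u > 0` and
`ν ∈ ℂ` by `K_ν(u) = ∫₀^∞ e^{-u cosh s} cosh(ν s) ds`. -/
noncomputable def besselK (ν : ℂ) (u : ℝ) : ℂ :=
  ∫ s in Set.Ioi (0 : ℝ), Complex.exp (-(u : ℂ) * Real.cosh s) * Complex.cosh (ν * s)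

lemma exp_neg_two_integral : (∫ s in Set.Ioi (0 : ℝ), Real.exp (-(2 * s))) = 1 / 2 := by
  have := MeasureTheory.integral_comp_mul_left_Ioi (fun x => Real.exp (-x)) 0
    (by norm_num : (0:ℝ) < 2)
  simp only [mul_zero] at this
  rw [this, integral_exp_neg_Ioi_zero]
  norm_num

/-- Exponential decay of the K-Bessel function of imaginary order beyond the transition
range: for `t ≥ 2` and `u ≥ 2t`, `cosh(πt/2) |K_{it}(u)| ≤ C e^{-u/5}`. -/
theorem besselK_imaginary_order_exponential_decay :
    ∃ C : ℝ, ∀ t : ℝ, 2 ≤ t → ∀ u : ℝ, 2 * t ≤ u →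
      Real.cosh (π * t / 2) * ‖besselK (Complex.I * t) u‖ ≤
        C * Real.exp (-u / 5) := by
  refine ⟨Real.exp 2 / 2, fun t ht u hu => ?_⟩
  have hu4 : (4:ℝ) ≤ u := by linarith
  -- pointwise bound on the integrand
  have key : ∀ s ∈ Set.Ioi (0:ℝ),
      ‖Complex.exp (-(u : ℂ) * Real.cosh s) * Complex.cosh (Complex.I * t * s)‖ ≤
        Real.exp (-u + 2) * Real.exp (-(2 * s)) := by
    intro s hs
    have hs0 : (0:ℝ) ≤ s := le_of_lt hs
    rw [norm_mul]
    have h1 : ‖Complex.exp (-(u : ℂ) * Real.cosh s)‖ = Real.exp (-u * Real.cosh s) := by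
      rw [Complex.norm_exp]
      norm_num
    have h2 : ‖Complex.cosh (Complex.I * t * s)‖ ≤ 1 := by
      have : Complex.I * t * s = ((t * s : ℝ) : ℂ) * Complex.I := by push_cast; ring
      rw [this, Complex.cosh_mul_I, ← Complex.ofReal_cos, Complex.norm_real,
        Real.norm_eq_abs]
      exact Real.abs_cos_le_one _
    calc ‖Complex.exp (-(u : ℂ) * Real.cosh s)‖ * ‖Complex.cosh (Complex.I * t * s)‖
        ≤ Real.exp (-u * Real.cosh s) * 1 := by
          rw [h1]; exact mul_le_mul_of_nonneg_left h2 (Real.exp_nonneg _)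
      _ ≤ Real.exp (-u + 2) * Real.exp (-(2 * s)) := by
          rw [mul_one, ← Real.exp_add]
          apply Real.exp_le_exp.2
          have hc1 : 1 ≤ Real.cosh s := Real.one_le_cosh s
          have hc2 : (1 + s) / 2 ≤ Real.cosh s := by
            have he : s + 1 ≤ Real.exp s := Real.add_one_le_exp s
            have hps : 0 < Real.exp (-s) := Real.exp_pos _
            rw [Real.cosh_eq]
            linarith
          nlinarith [mul_le_mul_of_nonneg_right hc2 (sub_nonneg.2 hu4),
            mul_le_mul_of_nonneg_left hc1 (by linarith : (0:ℝ) ≤ u - 4)]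
  -- bound the integral
  have hint : MeasureTheory.IntegrableOn
      (fun s => Real.exp (-u + 2) * Real.exp (-(2 * s))) (Set.Ioi (0:ℝ)) := by
    apply MeasureTheory.Integrable.const_mul
    simpa [MeasureTheory.IntegrableOn] using exp_neg_integrableOn_Ioi 0 (by norm_num : (0:ℝ) < 2)
  have habs : ‖besselK (Complex.I * t) u‖ ≤ Real.exp (-u + 2) / 2 := by
    have := MeasureTheory.norm_integral_le_of_norm_le hint
      (MeasureTheory.ae_restrict_of_forall_mem measurableSet_Ioi key)
    rw [MeasureTheory.integral_const_mul, exp_neg_two_integral] at this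
    calc ‖besselK (Complex.I * t) u‖ ≤ _ := this
      _ = Real.exp (-u + 2) / 2 := by ring
  have hπ : π < 3.2 := by linarith [Real.pi_lt_d2]
  calc Real.cosh (π * t / 2) * ‖besselK (Complex.I * t) u‖
      ≤ Real.exp (π * t / 2) * (Real.exp (-u + 2) / 2) := by
        have hce : Real.cosh (π * t / 2) ≤ Real.exp (π * t / 2) := by
          have hx : (0:ℝ) ≤ π * t / 2 := by positivity
          have h1 : Real.exp (-(π * t / 2)) ≤ 1 := by
            rw [Real.exp_le_one_iff]; linarith
          have h2 : (1:ℝ) ≤ Real.exp (π * t / 2) := Real.one_le_exp hx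
          rw [Real.cosh_eq]; linarith
        exact mul_le_mul hce habs (norm_nonneg _) (Real.exp_nonneg _)
    _ = Real.exp (π * t / 2 + (-u + 2)) / 2 := by simp only [Real.exp_add]; ring
    _ ≤ Real.exp (2 + -u / 5) / 2 := by
        apply div_le_div_of_nonneg_right _ (by norm_num)
        · apply Real.exp_le_exp.2
          have hπt : 0 < t := by linarith
          nlinarith
    _ = Real.exp 2 / 2 * Real.exp (-u / 5) := by simp only [Real.exp_add]; ring
end

section
/- Archimedean bound for the cuspidal triple product factors: let Γ_ℂ(s) = 2(2π)^{-s}Γ(s). There is an absolute constant C such that for all real t_j, t_f, t_g, t_k ≥ 1, setting N₁ = ∏_{ε₁,ε₂,ε₃ ∈ {±1}} |Γ_ℂ((1 + i(ε₁ t_k + ε₂ t_g + ε₃ t_j))/2)|, D₁ = |Γ_ℂ(1+it_k)|² |Γ_ℂ(1+it_g)|² |Γ_ℂ(1+it_j)|², N₂ = |Γ_ℂ((1+it_j)/2)|² |Γ_ℂ((1−it_j)/2)|² ∏_{ε₁,ε₂ ∈ {±1}} |Γ_ℂ((1 + ε₁ it_j)/2 + ε₂ it_f)|, and D₂ = |Γ_ℂ(1+it_f)|⁴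 |Γ_ℂ(1+it_j)|², one has (N₁/D₁)^{1/2} (N₂/D₂)^{1/2} ≤ C e^{-(π/2) Q₁(t_j; t_f, t_g, t_k)} / (t_j t_f t_k^{1/2} t_g^{1/2}). -/
open Real Complex Finset

/-- The completed complex Gamma factor `Γ_ℂ(s) = 2 (2π)^{-s} Γ(s)`. -/
noncomputable def GammaC (s : ℂ) : ℂ := 2 * (2 * (Real.pi : ℂ)) ^ (-s) * Complex.Gamma s

/-- The exponent function `Q₁` governing the exponential decay of the archimedean
factors in the triple product bounds. -/
noncomputable def Q1 (tj tf tg tk : ℝ) : ℝ :=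
  |tj / 2 + tf| + |tj / 2 - tf| + |tj + tg + tk| / 2 + |tj + tg - tk| / 2 +
    |tj - tg + tk| / 2 + |tj - tg - tk| / 2 - tj - 2 * tf - tk - tg

/-- The set of signs `{±1}`. -/
def signs : Finset ℤ := {-1, 1}

lemma absGamma_half (x : ℝ) :
    norm (Complex.Gamma (1/2 + (x:ℂ)*Complex.I)) ^ 2 = π / Real.cosh (π * x) := by
  have hconj : (starRingEnd ℂ) (1/2 + (x:ℂ)*Complex.I) = 1 - (1/2 + (x:ℂ)*Complex.I) := by
    simp [Complex.ext_iff]; norm_num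
  have hsin : Complex.sin (π * (1/2 + (x:ℂ)*Complex.I)) = (Real.cosh (π * x) : ℂ) := by
    have : (π:ℂ) * (1/2 + (x:ℂ)*Complex.I) = π/2 + ((π*x : ℝ):ℂ) * Complex.I := by
      push_cast; ring
    rw [this, Complex.sin_add, Complex.sin_pi_div_two, Complex.cos_pi_div_two,
      Complex.cos_mul_I]
    push_cast
    ring
  have key : ((norm (Complex.Gamma (1/2 + (x:ℂ)*Complex.I)) ^ 2 : ℝ) : ℂ)
      = ((π / Real.cosh (π * x) : ℝ) : ℂ) := by
    rw [← Complex.normSq_eq_norm_sq, ← Complex.mul_conj]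
    rw [← Complex.Gamma_conj, hconj, Complex.Gamma_mul_Gamma_one_sub, hsin]
    push_cast
    ring
  exact_mod_cast key

lemma absGamma_one (t : ℝ) (ht : t ≠ 0) :
    norm (Complex.Gamma (1 + (t:ℂ)*Complex.I)) ^ 2 = π * t / Real.sinh (π * t) := by
  have hI : ((t:ℂ)*Complex.I) ≠ 0 := by
    simp [Complex.ext_iff, ht]
  have hconj : (starRingEnd ℂ) (1 + (t:ℂ)*Complex.I) = 1 - (t:ℂ)*Complex.I := by
    simp [Complex.ext_iff]
  have hadd : Complex.Gamma (1 + (t:ℂ)*Complex.I)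
      = (t:ℂ)*Complex.I * Complex.Gamma ((t:ℂ)*Complex.I) := by
    rw [show (1 + (t:ℂ)*Complex.I) = (t:ℂ)*Complex.I + 1 by ring,
      Complex.Gamma_add_one _ hI]
  have hsin : Complex.sin (π * ((t:ℂ)*Complex.I)) = (Real.sinh (π * t) : ℂ) * Complex.I := by
    rw [show (π:ℂ) * ((t:ℂ)*Complex.I) = ((π*t : ℝ):ℂ) * Complex.I by push_cast; ring,
      Complex.sin_mul_I]
    push_cast
    ring
  have hs : Real.sinh (π * t) ≠ 0 := by
    simp only [ne_eq, Real.sinh_eq_zero]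
    positivity
  have key : ((norm (Complex.Gamma (1 + (t:ℂ)*Complex.I)) ^ 2 : ℝ) : ℂ)
      = ((π * t / Real.sinh (π * t) : ℝ) : ℂ) := by
    rw [← Complex.normSq_eq_norm_sq, ← Complex.mul_conj, ← Complex.Gamma_conj, hconj, hadd,
      mul_assoc, Complex.Gamma_mul_Gamma_one_sub, hsin]
    have hsC : ((Real.sinh (π * t) : ℝ):ℂ) ≠ 0 := by exact_mod_cast hs
    push_cast
    rw [← div_div, show (↑t * Complex.I * (↑π / Complex.sinh (↑π*↑t) / Complex.I) : ℂ)
        = ↑π / Complex.sinh (↑π*↑t) / Complex.I * Complex.I * ↑t by ring,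
      div_mul_cancel₀ _ Complex.I_ne_zero]
    ring
  exact_mod_cast key

lemma twopi : ((2:ℂ) * (Real.pi:ℂ)) = ((2*π : ℝ):ℂ) := by push_cast; ring

lemma absGammaC (s : ℂ) :
    norm (GammaC s) = 2 * (2*π : ℝ) ^ (-s.re) * norm (Complex.Gamma s) := by
  unfold GammaC
  rw [norm_mul, norm_mul, twopi, Complex.norm_cpow_eq_rpow_re_of_pos (by positivity)]
  simp

lemma absGammaC_half_sq (x : ℝ) :
    norm (GammaC (1/2 + (x:ℂ)*Complex.I)) ^ 2 = 2 / Real.cosh (π * x) := by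
  rw [absGammaC]
  have hre : (-((1:ℂ)/2 + (x:ℂ)*Complex.I)).re = (-(1/2 : ℝ)) := by
    simp [Complex.ext_iff]
  rw [show ((1:ℂ)/2 + (x:ℂ)*Complex.I).re = (1/2 : ℝ) by simp]
  rw [mul_pow, mul_pow, absGamma_half]
  rw [← Real.rpow_natCast ((2*π:ℝ) ^ (-(1/2:ℝ))) 2, ← Real.rpow_mul (by positivity)]
  norm_num
  rw [Real.rpow_neg_one]
  have : Real.cosh (π*x) > 0 := Real.cosh_pos _
  field_simp
  ring

lemma absGammaC_one_sq (t : ℝ) (ht : t ≠ 0) :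
    norm (GammaC (1 + (t:ℂ)*Complex.I)) ^ 2 = t / (π * Real.sinh (π * t)) := by
  rw [absGammaC]
  rw [show ((1:ℂ) + (t:ℂ)*Complex.I).re = (1 : ℝ) by simp]
  rw [mul_pow, mul_pow, absGamma_one t ht]
  rw [Real.rpow_neg_one]
  have h1 : Real.sinh (π*t) ≠ 0 := by
    simp only [ne_eq, Real.sinh_eq_zero]
    exact mul_ne_zero Real.pi_ne_zero ht
  have h2 : (π:ℝ) ≠ 0 := Real.pi_ne_zero
  field_simp

lemma GammaC_half_le (x : ℝ) :
    norm (GammaC (1/2 + (x:ℂ)*Complex.I)) ≤ 2 * Real.exp (-(π * |x|)/2) := by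
  have h1 : Real.exp (π * |x|) ≤ 2 * Real.cosh (π * x) := by
    rw [Real.cosh_eq]
    rcases abs_cases x with ⟨h, _⟩ | ⟨h, _⟩
    · rw [h]
      nlinarith [Real.exp_pos (-(π*x))]
    · rw [h]
      rw [show π * -x = -(π*x) by ring]
      nlinarith [Real.exp_pos (π*x)]
  apply le_of_pow_le_pow_left₀ two_ne_zero (by positivity)
  rw [absGammaC_half_sq, mul_pow, ← Real.exp_nat_mul]
  have hc : 0 < Real.cosh (π * x) := Real.cosh_pos _
  rw [div_le_iff₀ hc]
  have h3 : Real.exp ((2:ℕ) * (-(π * |x|)/2)) = Real.exp (-(π*|x|)) := by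
    congr 1; push_cast; ring
  rw [h3, show (2:ℝ)^2 * Real.exp (-(π*|x|)) * Real.cosh (π*x)
      = 2 * Real.exp (-(π*|x|)) * (2 * Real.cosh (π*x)) by ring]
  calc (2:ℝ) = 2 * Real.exp (-(π*|x|)) * Real.exp (π*|x|) := by
        rw [mul_assoc, ← Real.exp_add]; simp
    _ ≤ 2 * Real.exp (-(π*|x|)) * (2 * Real.cosh (π*x)) := by
        have : (0:ℝ) < 2 * Real.exp (-(π*|x|)) := by positivity
        exact mul_le_mul_of_nonneg_left h1 this.le

lemma GammaC_one_sq_ge (t : ℝ) (ht : 1 ≤ t) :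
    2/π * t * Real.exp (-(π*t)) ≤ norm (GammaC (1 + (t:ℂ)*Complex.I)) ^ 2 := by
  have ht0 : (0:ℝ) < t := lt_of_lt_of_le one_pos ht
  rw [absGammaC_one_sq t ht0.ne']
  have hs : Real.sinh (π * t) ≤ Real.exp (π * t) / 2 := by
    rw [Real.sinh_eq]
    have := Real.exp_pos (-(π*t))
    nlinarith
  have hs0 : 0 < Real.sinh (π * t) := by
    rw [Real.sinh_pos_iff]
    positivity
  rw [div_mul_eq_mul_div, div_mul_eq_mul_div, div_le_div_iff₀ (by positivity) (by positivity)]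
  have he : Real.exp (-(π*t)) * Real.exp (π*t) = 1 := by
    rw [← Real.exp_add]; simp
  calc 2*t*Real.exp (-(π*t)) * (π * Real.sinh (π*t))
      ≤ 2*t*Real.exp (-(π*t)) * (π * (Real.exp (π*t)/2)) := by gcongr
    _ = t*π*(Real.exp (-(π*t))*Real.exp (π*t)) := by ring
    _ = t * π := by rw [he, mul_one]

lemma GammaC_arg_le (z : ℂ) (x r : ℝ) (hz : z = 1/2 + (x:ℂ)*Complex.I) (hr : |x| = r) :
    norm (GammaC z) ≤ 2 * Real.exp (-(π * r)/2) := by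
  rw [hz, ← hr]; exact GammaC_half_le x

lemma prod8 (x1 x2 x3 x4 x5 x6 x7 x8 : ℝ) :
    (2*Real.exp x1)*(2*Real.exp x2)*((2*Real.exp x3)*(2*Real.exp x4))*
      ((2*Real.exp x5)*(2*Real.exp x6)*((2*Real.exp x7)*(2*Real.exp x8)))
    = 256 * Real.exp (x1+x2+x3+x4+x5+x6+x7+x8) := by
  rw [Real.exp_add, Real.exp_add, Real.exp_add, Real.exp_add, Real.exp_add, Real.exp_add,
    Real.exp_add]
  ring

lemma prod4 (x1 x2 x3 x4 : ℝ) :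
    (2*Real.exp x1)*(2*Real.exp x2)*((2*Real.exp x3)*(2*Real.exp x4))
    = 16 * Real.exp (x1+x2+x3+x4) := by
  rw [Real.exp_add, Real.exp_add, Real.exp_add]
  ring


/-- Archimedean bound for the cuspidal triple product factors:
`(N₁/D₁)^{1/2} (N₂/D₂)^{1/2} ≤ C e^{-(π/2) Q₁(t_j; t_f, t_g, t_k)} / (t_j t_f t_k^{1/2} t_g^{1/2})`. -/
theorem archimedean_bound_cuspidal_triple_product :
    ∃ C : ℝ, ∀ tj tf tg tk : ℝ, 1 ≤ tj → 1 ≤ tf → 1 ≤ tg → 1 ≤ tk →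
      ((∏ e1 ∈ signs, ∏ e2 ∈ signs, ∏ e3 ∈ signs,
          norm (GammaC ((1 + Complex.I * ((e1 * tk + e2 * tg + e3 * tj : ℝ) : ℂ)) / 2))) /
        (norm (GammaC (1 + (tk : ℂ) * Complex.I)) ^ 2 *
          norm (GammaC (1 + (tg : ℂ) * Complex.I)) ^ 2 *
          norm (GammaC (1 + (tj : ℂ) * Complex.I)) ^ 2)) ^ ((1 : ℝ) / 2) *
      ((norm (GammaC ((1 + (tj : ℂ) * Complex.I) / 2)) ^ 2 *
          norm (GammaC ((1 - (tj : ℂ) * Complex.I) / 2)) ^ 2 *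
          ∏ e1 ∈ signs, ∏ e2 ∈ signs,
            norm (GammaC ((1 + ((e1 : ℝ) : ℂ) * (tj : ℂ) * Complex.I) / 2 +
              ((e2 : ℝ) : ℂ) * (tf : ℂ) * Complex.I))) /
        (norm (GammaC (1 + (tf : ℂ) * Complex.I)) ^ 4 *
          norm (GammaC (1 + (tj : ℂ) * Complex.I)) ^ 2)) ^ ((1 : ℝ) / 2) ≤
      C * Real.exp (-(π / 2) * Q1 tj tf tg tk) /
        (tj * tf * tk ^ ((1 : ℝ) / 2) * tg ^ ((1 : ℝ) / 2)) := by
  refine ⟨32*π^3, ?_⟩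
  intro tj tf tg tk htj htf htg htk
  have htj0 : (0:ℝ) < tj := lt_of_lt_of_le one_pos htj
  have htf0 : (0:ℝ) < tf := lt_of_lt_of_le one_pos htf
  have htg0 : (0:ℝ) < tg := lt_of_lt_of_le one_pos htg
  have htk0 : (0:ℝ) < tk := lt_of_lt_of_le one_pos htk
  -- numerator bound 1
  have hN1 : (∏ e1 ∈ signs, ∏ e2 ∈ signs, ∏ e3 ∈ signs,
      norm (GammaC ((1 + Complex.I * ((e1 * tk + e2 * tg + e3 * tj : ℝ) : ℂ)) / 2)))
      ≤ 256 * Real.exp (-(π * (|tj + tg + tk|/2))/2 + -(π * (|tj - tg - tk|/2))/2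
        + -(π * (|tj - tg + tk|/2))/2 + -(π * (|tj + tg - tk|/2))/2
        + -(π * (|tj + tg - tk|/2))/2 + -(π * (|tj - tg + tk|/2))/2
        + -(π * (|tj - tg - tk|/2))/2 + -(π * (|tj + tg + tk|/2))/2) := by
    rw [← prod8]
    simp only [signs, Finset.prod_insert (by decide : (-1:ℤ) ∉ ({1}:Finset ℤ)),
      Finset.prod_singleton]
    push_cast
    gcongr
    · exact GammaC_arg_le _ ((-tk - tg - tj)/2) _ (by push_cast; ring)
        (by rw [show (-tk - tg - tj)/2 = -((tj + tg + tk)/2) by ring, abs_neg, abs_div, _root_.abs_two])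
    · exact GammaC_arg_le _ ((-tk - tg + tj)/2) _ (by push_cast; ring)
        (by rw [show (-tk - tg + tj)/2 = (tj - tg - tk)/2 by ring, abs_div, _root_.abs_two])
    · exact GammaC_arg_le _ ((-tk + tg - tj)/2) _ (by push_cast; ring)
        (by rw [show (-tk + tg - tj)/2 = -((tj - tg + tk)/2) by ring, abs_neg, abs_div, _root_.abs_two])
    · exact GammaC_arg_le _ ((-tk + tg + tj)/2) _ (by push_cast; ring)
        (by rw [show (-tk + tg + tj)/2 = (tj + tg - tk)/2 by ring, abs_div, _root_.abs_two])
    · exact GammaC_arg_le _ ((tk - tg - tj)/2) _ (by push_cast; ring)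
        (by rw [show (tk - tg - tj)/2 = -((tj + tg - tk)/2) by ring, abs_neg, abs_div, _root_.abs_two])
    · exact GammaC_arg_le _ ((tk - tg + tj)/2) _ (by push_cast; ring)
        (by rw [show (tk - tg + tj)/2 = (tj - tg + tk)/2 by ring, abs_div, _root_.abs_two])
    · exact GammaC_arg_le _ ((tk + tg - tj)/2) _ (by push_cast; ring)
        (by rw [show (tk + tg - tj)/2 = -((tj - tg - tk)/2) by ring, abs_neg, abs_div, _root_.abs_two])
    · exact GammaC_arg_le _ ((tk + tg + tj)/2) _ (by push_cast; ring)
        (by rw [show (tk + tg + tj)/2 = (tj + tg + tk)/2 by ring, abs_div, _root_.abs_two])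
  -- numerator bound 2 : product over e1 e2
  have hsqb : ∀ a u : ℝ, 0 ≤ a → a ≤ 2 * Real.exp u → a^2 ≤ 4 * Real.exp (2*u) := by
    intro a u ha h
    calc a^2 ≤ (2*Real.exp u)^2 := pow_le_pow_left₀ ha h 2
      _ = 4 * Real.exp (2*u) := by
        rw [mul_pow, sq (Real.exp u), ← Real.exp_add]
        norm_num
        ring_nf
  have hN2c : (∏ e1 ∈ signs, ∏ e2 ∈ signs,
      norm (GammaC ((1 + ((e1 : ℝ) : ℂ) * (tj : ℂ) * Complex.I) / 2 +
        ((e2 : ℝ) : ℂ) * (tf : ℂ) * Complex.I)))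
      ≤ 16 * Real.exp (-(π * |tj / 2 + tf|)/2 + -(π * |tj / 2 - tf|)/2
        + -(π * |tj / 2 - tf|)/2 + -(π * |tj / 2 + tf|)/2) := by
    rw [← prod4]
    simp only [signs, Finset.prod_insert (by decide : (-1:ℤ) ∉ ({1}:Finset ℤ)),
      Finset.prod_singleton]
    push_cast
    gcongr
    · exact GammaC_arg_le _ (-(tj/2) - tf) _ (by push_cast; ring)
        (by rw [show -(tj/2) - tf = -(tj / 2 + tf) by ring, abs_neg])
    · exact GammaC_arg_le _ (-(tj/2) + tf) _ (by push_cast; ring)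
        (by rw [show -(tj/2) + tf = -(tj / 2 - tf) by ring, abs_neg])
    · exact GammaC_arg_le _ (tj/2 - tf) _ (by push_cast; ring) rfl
    · exact GammaC_arg_le _ (tj/2 + tf) _ (by push_cast; ring) rfl
  have hN2a : norm (GammaC ((1 + (tj : ℂ) * Complex.I) / 2)) ^ 2
      ≤ 4 * Real.exp (2 * (-(π * (tj/2))/2)) := by
    apply hsqb _ _ (by positivity)
    exact GammaC_arg_le _ (tj/2) _ (by push_cast; ring) (_root_.abs_of_nonneg (by positivity))
  have hN2b : norm (GammaC ((1 - (tj : ℂ) * Complex.I) / 2)) ^ 2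
      ≤ 4 * Real.exp (2 * (-(π * (tj/2))/2)) := by
    apply hsqb _ _ (by positivity)
    exact GammaC_arg_le _ (-(tj/2)) _ (by push_cast; ring)
      (by rw [abs_neg, _root_.abs_of_nonneg (by positivity : (0:ℝ) ≤ tj/2)])
  -- denominator bounds
  have hD1 : 2/π*tk*Real.exp (-(π*tk)) * (2/π*tg*Real.exp (-(π*tg)))
        * (2/π*tj*Real.exp (-(π*tj)))
      ≤ norm (GammaC (1 + (tk : ℂ) * Complex.I)) ^ 2 *
          norm (GammaC (1 + (tg : ℂ) * Complex.I)) ^ 2 *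
          norm (GammaC (1 + (tj : ℂ) * Complex.I)) ^ 2 := by
    have h1 := GammaC_one_sq_ge tk htk
    have h2 := GammaC_one_sq_ge tg htg
    have h3 := GammaC_one_sq_ge tj htj
    gcongr <;> positivity
  have hD2 : (2/π*tf*Real.exp (-(π*tf)))^2 * (2/π*tj*Real.exp (-(π*tj)))
      ≤ norm (GammaC (1 + (tf : ℂ) * Complex.I)) ^ 4 *
          norm (GammaC (1 + (tj : ℂ) * Complex.I)) ^ 2 := by
    have h1 : ((2/π*tf*Real.exp (-(π*tf)))^2)
        ≤ (norm (GammaC (1 + (tf : ℂ) * Complex.I)) ^ 2)^2 :=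
      pow_le_pow_left₀ (by positivity) (GammaC_one_sq_ge tf htf) 2
    rw [← pow_mul] at h1
    have h3 := GammaC_one_sq_ge tj htj
    gcongr <;> positivity
  -- reduce to squares
  have hsq : ∀ x:ℝ, 0 ≤ x → (x^((1:ℝ)/2))^2 = x := by
    intro x hx
    rw [← Real.rpow_natCast (x^((1:ℝ)/2)) 2, ← Real.rpow_mul hx]
    norm_num
  apply le_of_pow_le_pow_left₀ two_ne_zero (by positivity)
  rw [mul_pow, hsq _ (by positivity), hsq _ (by positivity)]
  have hP : (tj * tf * tk ^ ((1:ℝ)/2) * tg ^ ((1:ℝ)/2))^2 = tj^2*tf^2*(tk*tg) := by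
    rw [mul_pow, mul_pow, mul_pow, hsq tk htk0.le, hsq tg htg0.le]
    ring
  have hC' : (32*π^3 * Real.exp (-(π / 2) * Q1 tj tf tg tk))^2
      = 1024*π^6*Real.exp (-(π * Q1 tj tf tg tk)) := by
    rw [mul_pow, sq (Real.exp _), ← Real.exp_add]
    rw [show (-(π/2) * Q1 tj tf tg tk + -(π/2) * Q1 tj tf tg tk)
      = -(π * Q1 tj tf tg tk) by ring]
    ring
  rw [div_pow, hC', hP]
  -- abbreviations
  have hN2 : norm (GammaC ((1 + (tj : ℂ) * Complex.I) / 2)) ^ 2 *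
        norm (GammaC ((1 - (tj : ℂ) * Complex.I) / 2)) ^ 2 *
        ∏ e1 ∈ signs, ∏ e2 ∈ signs,
          norm (GammaC ((1 + ((e1 : ℝ) : ℂ) * (tj : ℂ) * Complex.I) / 2 +
            ((e2 : ℝ) : ℂ) * (tf : ℂ) * Complex.I))
      ≤ 256 * Real.exp (2 * (-(π * (tj/2))/2) + 2 * (-(π * (tj/2))/2)
          + (-(π * |tj / 2 + tf|)/2 + -(π * |tj / 2 - tf|)/2
            + -(π * |tj / 2 - tf|)/2 + -(π * |tj / 2 + tf|)/2)) := by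
    calc norm (GammaC ((1 + (tj : ℂ) * Complex.I) / 2)) ^ 2 *
        norm (GammaC ((1 - (tj : ℂ) * Complex.I) / 2)) ^ 2 *
        ∏ e1 ∈ signs, ∏ e2 ∈ signs,
          norm (GammaC ((1 + ((e1 : ℝ) : ℂ) * (tj : ℂ) * Complex.I) / 2 +
            ((e2 : ℝ) : ℂ) * (tf : ℂ) * Complex.I))
        ≤ (4 * Real.exp (2 * (-(π * (tj/2))/2))) * (4 * Real.exp (2 * (-(π * (tj/2))/2))) *
          (16 * Real.exp (-(π * |tj / 2 + tf|)/2 + -(π * |tj / 2 - tf|)/2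
            + -(π * |tj / 2 - tf|)/2 + -(π * |tj / 2 + tf|)/2)) := by
          have h0 : (0:ℝ) ≤ norm (GammaC ((1 + (tj : ℂ) * Complex.I) / 2)) ^ 2 := by
            positivity
          exact mul_le_mul (mul_le_mul hN2a hN2b (by positivity) (by positivity)) hN2c
            (by positivity) (by positivity)
      _ = _ := by
          simp only [Real.exp_add]
          ring
  set E1 := -(π * (|tj + tg + tk|/2))/2 + -(π * (|tj - tg - tk|/2))/2
        + -(π * (|tj - tg + tk|/2))/2 + -(π * (|tj + tg - tk|/2))/2
        + -(π * (|tj + tg - tk|/2))/2 + -(π * (|tj - tg + tk|/2))/2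
        + -(π * (|tj - tg - tk|/2))/2 + -(π * (|tj + tg + tk|/2))/2 with hE1
  set E2 := 2 * (-(π * (tj/2))/2) + 2 * (-(π * (tj/2))/2)
          + (-(π * |tj / 2 + tf|)/2 + -(π * |tj / 2 - tf|)/2
            + -(π * |tj / 2 - tf|)/2 + -(π * |tj / 2 + tf|)/2) with hE2
  set L1 := 2/π*tk*Real.exp (-(π*tk)) * (2/π*tg*Real.exp (-(π*tg)))
        * (2/π*tj*Real.exp (-(π*tj))) with hL1
  set L2 := (2/π*tf*Real.exp (-(π*tf)))^2 * (2/π*tj*Real.exp (-(π*tj))) with hL2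
  calc _ ≤ (256 * Real.exp E1)/L1 * ((256 * Real.exp E2)/L2) := by
        have k1 := div_le_div₀ (by positivity) hN1 (by positivity) hD1
        have k2 := div_le_div₀ (by positivity) hN2 (by positivity) hD2
        exact mul_le_mul k1 k2 (by positivity) (by positivity)
    _ = 1024*π^6*Real.exp (-(π * Q1 tj tf tg tk)) / (tj^2*tf^2*(tk*tg)) := by
        have hsplit : Real.exp (-(π * Q1 tj tf tg tk)) = Real.exp E1 * Real.exp E2 /
            (Real.exp (-(π*tk)) * Real.exp (-(π*tg)) * Real.exp (-(π*tj)) *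
              (Real.exp (-(π*tf)))^2 * Real.exp (-(π*tj))) := by
          rw [eq_div_iff (by positivity), sq]
          simp only [← Real.exp_add]
          congr 1
          simp only [Q1, hE1, hE2]
          ring
        rw [hsplit, hL1, hL2]
        have e1 := Real.exp_ne_zero (-(π*tk))
        have e2 := Real.exp_ne_zero (-(π*tg))
        have e3 := Real.exp_ne_zero (-(π*tj))
        have e4 := Real.exp_ne_zero (-(π*tf))
        have hpi := Real.pi_ne_zero
        field_simp
        ring
end

section
/- Archimedean bound for the triple product factors with one Eisenstein parameter: let Γ_ℂ(s) = 2(2π)^{-s}Γ(s). There is an absolute constant C such that for all real t_j, t_f, t_g ≥ 1 and all real t, setting N₁ = ∏_{ε₁,ε₂,ε₃ ∈ {±1}} |Γ_ℂ((1 + i(ε₁ t + ε₂ t_g + ε₃ t_j))/2)|, D₁ = |Γ(1+it)|² |Γ_ℂ(1+it_g)|² |Γ_ℂ(1+it_j)|², N₂ = |Γ_ℂ((1+it_j)/2)|² |Γ_ℂ((1−it_j)/2)|² ∏_{ε₁,ε₂ ∈ {±1}} |Γ_ℂ((1 + ε₁ it_j)/2 + ε₂ it_f)|, and D₂ = |Γ_ℂ(1+it_f)|⁴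 |Γ_ℂ(1+it_j)|², one has (N₁/D₁)^{1/2} (N₂/D₂)^{1/2} ≤ C e^{-(π/2) Q₁(t_j; t_f, t_g, |t|)} / (t_j t_f (1+|t|)^{1/2} t_g^{1/2}). -/
open Real Complex Finset

lemma abs_Gamma_half_sq (y : ℝ) :
    ‖Complex.Gamma (1/2 + (y:ℂ) * Complex.I)‖ ^ 2 = π / Real.cosh (π * y) := by
  set z : ℂ := 1/2 + (y:ℂ) * Complex.I with hz
  have hconj : (starRingEnd ℂ) z = 1 - z := by
    rw [hz]; simp [Complex.ext_iff]; norm_num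
  have h1 : ((‖Complex.Gamma z‖ ^ 2 : ℝ) : ℂ) = ↑π / Complex.sin (↑π * z) := by
    push_cast [Complex.sq_norm]
    rw [← Complex.mul_conj, ← Complex.Gamma_conj, hconj, Complex.Gamma_mul_Gamma_one_sub]
  have h2 : Complex.sin (↑π * z) = ((Real.cosh (π * y) : ℝ) : ℂ) := by
    have e : (↑π : ℂ) * z = ↑π/2 + ((π * y : ℝ) : ℂ) * Complex.I := by rw [hz]; push_cast; ring
    rw [e, Complex.sin_add, Complex.sin_pi_div_two, Complex.cos_pi_div_two, Complex.cos_mul_I,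
      Complex.ofReal_cosh]
    ring
  rw [h2] at h1
  exact_mod_cast h1

private lemma aux_div (a sh : ℝ) (hsh : sh ≠ 0) :
    (-(a:ℂ) * Complex.I) * (↑π / (-(sh : ℂ) * Complex.I)) = ((π * a / sh : ℝ) : ℂ) := by
  have hshC : (sh : ℂ) ≠ 0 := by exact_mod_cast hsh
  have h : (-(sh:ℂ) * Complex.I) ≠ 0 := by simp [hshC]
  field_simp
  push_cast
  field_simp

lemma abs_Gamma_one_sq (t : ℝ) (ht : t ≠ 0) :
    ‖Complex.Gamma (1 + (t:ℂ) * Complex.I)‖ ^ 2 = π * t / Real.sinh (π * t) := by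
  set z : ℂ := 1 + (t:ℂ) * Complex.I with hz
  have hti : ((t:ℂ) * Complex.I) ≠ 0 := by simp [Complex.ext_iff, ht]
  have hGconj : Complex.Gamma ((starRingEnd ℂ) z) = (-(t:ℂ) * Complex.I) * Complex.Gamma (1 - z) := by
    have e1 : (starRingEnd ℂ) z = (-(t:ℂ) * Complex.I) + 1 := by
      rw [hz]; simp [Complex.ext_iff]
    have e2 : (1:ℂ) - z = -(t:ℂ) * Complex.I := by rw [hz]; ring
    rw [e1, Complex.Gamma_add_one _ (by simpa using hti), e2]
  have hsin : Complex.sin (↑π * z) = -(((Real.sinh (π * t) : ℝ)) : ℂ) * Complex.I := by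
    have e : (↑π : ℂ) * z = ↑π + ((π * t : ℝ) : ℂ) * Complex.I := by rw [hz]; push_cast; ring
    rw [e, Complex.sin_add, Complex.sin_pi, Complex.cos_pi, Complex.sin_mul_I,
      Complex.ofReal_sinh]
    ring
  have hsh : Real.sinh (π * t) ≠ 0 := by
    simp [Real.sinh_eq_zero]
    exact ht
  have h1 : ((‖Complex.Gamma z‖ ^ 2 : ℝ) : ℂ)
      = (-(t:ℂ) * Complex.I) * (↑π / (-(((Real.sinh (π * t) : ℝ)) : ℂ) * Complex.I)) := by
    rw [show ((‖Complex.Gamma z‖ ^ 2 : ℝ) : ℂ)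
        = Complex.Gamma z * (starRingEnd ℂ) (Complex.Gamma z) from by
      rw [Complex.mul_conj]; exact congrArg Complex.ofReal (Complex.sq_norm _)]
    rw [← Complex.Gamma_conj, hGconj]
    rw [show Complex.Gamma z * (-(t:ℂ) * Complex.I * Complex.Gamma (1 - z))
        = (-(t:ℂ) * Complex.I) * (Complex.Gamma z * Complex.Gamma (1 - z)) by ring,
      Complex.Gamma_mul_Gamma_one_sub, hsin]
  rw [aux_div t _ hsh] at h1
  exact_mod_cast h1

lemma absC_half_sq (y : ℝ) :
    ‖GammaC (1/2 + (y:ℂ) * Complex.I)‖ ^ 2 = 2 / Real.cosh (π * y) := by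
  unfold GammaC
  rw [norm_mul, norm_mul]
  rw [show (2 * (Real.pi:ℂ)) = ((2*π : ℝ) : ℂ) by push_cast; ring]
  rw [Complex.norm_cpow_eq_rpow_re_of_pos Real.two_pi_pos]
  have hre : (-(1/2 + (y:ℂ) * Complex.I)).re = -(1/2 : ℝ) := by simp
  rw [hre]
  rw [mul_pow, mul_pow, abs_Gamma_half_sq]
  have h2 : ((2*π : ℝ) ^ (-(1/2:ℝ)))^2 = (2*π)⁻¹ := by
    rw [← Real.rpow_natCast ((2*π:ℝ) ^ (-(1/2:ℝ))) 2, ← Real.rpow_mul Real.two_pi_pos.le]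
    norm_num [Real.rpow_neg_one]
  rw [h2]
  have hc := Real.cosh_pos (π * y)
  have hπ := Real.pi_pos
  rw [Complex.norm_two]
  field_simp

lemma absC_one_sq (x : ℝ) (hx : x ≠ 0) :
    ‖GammaC (1 + (x:ℂ) * Complex.I)‖ ^ 2 = x / (π * Real.sinh (π * x)) := by
  unfold GammaC
  rw [norm_mul, norm_mul]
  rw [show (2 * (Real.pi:ℂ)) = ((2*π : ℝ) : ℂ) by push_cast; ring]
  rw [Complex.norm_cpow_eq_rpow_re_of_pos Real.two_pi_pos]
  have hre : (-(1 + (x:ℂ) * Complex.I)).re = -(1 : ℝ) := by simp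
  rw [hre]
  rw [mul_pow, mul_pow, abs_Gamma_one_sq x hx]
  have h2 : ((2*π : ℝ) ^ (-(1:ℝ)))^2 = ((2*π)^2)⁻¹ := by
    rw [Real.rpow_neg_one]
    rw [← inv_pow]
  rw [h2, Complex.norm_two]
  have hsh : Real.sinh (π * x) ≠ 0 := by
    simp [Real.sinh_eq_zero]
    exact hx
  have hπ := Real.pi_pos
  field_simp

lemma bound_half (y : ℝ) :
    ‖GammaC (1/2 + (y:ℂ) * Complex.I)‖ ≤ 2 * Real.exp (-(π/2) * |y|) := by
  have h0 : (0:ℝ) ≤ ‖GammaC (1/2 + (y:ℂ) * Complex.I)‖ := norm_nonneg _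
  have hsq : ‖GammaC (1/2 + (y:ℂ) * Complex.I)‖ ^ 2 = 2 / Real.cosh (π * y) :=
    absC_half_sq y
  have hcosh : Real.exp (π * |y|) / 2 ≤ Real.cosh (π * y) := by
    rw [Real.cosh_eq]
    rcases abs_cases y with ⟨h, _⟩ | ⟨h, _⟩
    · rw [h]
      nlinarith [Real.exp_pos (-(π*y))]
    · rw [h]
      have : π * -y = -(π * y) := by ring
      rw [this]
      nlinarith [Real.exp_pos (π*y)]
  have hub : ‖GammaC (1/2 + (y:ℂ) * Complex.I)‖ ^ 2 ≤ 4 * Real.exp (-(π * |y|)) := by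
    rw [hsq, Real.exp_neg]
    have he := Real.exp_pos (π * |y|)
    calc 2 / Real.cosh (π * y) ≤ 2 / (Real.exp (π * |y|) / 2) := by
          apply div_le_div_of_nonneg_left (by norm_num) (by positivity) hcosh
      _ = 4 * (Real.exp (π * |y|))⁻¹ := by field_simp; ring
  have hrhs : (2 * Real.exp (-(π/2) * |y|))^2 = 4 * Real.exp (-(π * |y|)) := by
    rw [mul_pow, ← Real.exp_nat_mul]
    norm_num
    ring_nf
  nlinarith [Real.exp_pos (-(π/2) * |y|)]

lemma lower_one (x : ℝ) (hx : 0 < x) :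
    2/π * x * Real.exp (-π * x) ≤ ‖GammaC (1 + (x:ℂ) * Complex.I)‖ ^ 2 := by
  rw [absC_one_sq x hx.ne']
  have hsh : 0 < Real.sinh (π * x) := Real.sinh_pos_iff.mpr (by positivity)
  have hub : Real.sinh (π * x) ≤ Real.exp (π * x) / 2 := by
    rw [Real.sinh_eq]
    nlinarith [Real.exp_pos (-(π*x))]
  have h2 : x / (π * (Real.exp (π * x) / 2)) = 2/π * x * Real.exp (-π * x) := by
    rw [show -π * x = -(π*x) by ring, Real.exp_neg]
    have := Real.exp_pos (π * x)
    have hπ := Real.pi_pos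
    field_simp
  rw [← h2]
  gcongr

lemma lower_gamma (t : ℝ) :
    π/(Real.exp π + π) * (1 + |t|) * Real.exp (-π * |t|) ≤
      ‖Complex.Gamma (1 + (t : ℂ) * Complex.I)‖ ^ 2 := by
  have hπ := Real.pi_pos
  have heπ := Real.exp_pos π
  have hc1 : π/(Real.exp π + π) ≤ 1 := by
    rw [div_le_one (by positivity)]
    linarith
  rcases eq_or_ne t 0 with rfl | ht
  · simp [Complex.Gamma_one]
    nlinarith
  · rw [abs_Gamma_one_sq t ht]
    have heven : π * t / Real.sinh (π * t) = π * |t| / Real.sinh (π * |t|) := by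
      rcases abs_cases t with ⟨h, _⟩ | ⟨h, _⟩
      · rw [h]
      · rw [h, show π * -t = -(π * t) by ring, Real.sinh_neg, neg_div_neg_eq]
    rw [heven]
    set s := |t| with hs
    have hs0 : 0 < s := abs_pos.mpr ht
    have hsh : 0 < Real.sinh (π * s) := Real.sinh_pos_iff.mpr (by positivity)
    rcases le_or_gt s 1 with hle | hgt
    · have hconv : Real.exp (π * s) ≤ (1 - s) + s * Real.exp π := by
        have := convexOn_exp.2 (Set.mem_univ (0:ℝ)) (Set.mem_univ π)
          (by linarith : (0:ℝ) ≤ 1 - s) hs0.le (by ring : (1 - s) + s = 1)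
        simpa [smul_eq_mul, mul_comm] using this
      have hlow : 1 - π * s ≤ Real.exp (-(π * s)) := by
        have := Real.add_one_le_exp (-(π * s))
        linarith
      have hub : Real.sinh (π * s) ≤ s * (Real.exp π + π) / 2 := by
        rw [Real.sinh_eq]
        have : Real.exp (π * s) - Real.exp (-(π*s)) ≤ s * (Real.exp π + π) := by
          nlinarith
        linarith
      have key : 2*π/(Real.exp π + π) ≤ π * s / Real.sinh (π * s) := by
        calc 2*π/(Real.exp π + π) = π * s / (s * (Real.exp π + π) / 2) := by
              field_simp
          _ ≤ π * s / Real.sinh (π * s) := by gcongr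
      have hfac : π/(Real.exp π + π) * (1 + s) * Real.exp (-π * s) ≤ 2*π/(Real.exp π + π) := by
        have he1 : Real.exp (-π * s) ≤ 1 := by
          rw [Real.exp_le_one_iff]; nlinarith
        have h1s : 1 + s ≤ 2 := by linarith
        have hc : 0 < π/(Real.exp π + π) := by positivity
        have he0 := Real.exp_pos (-π * s)
        have step : π/(Real.exp π + π) * (1 + s) * Real.exp (-π * s)
            ≤ π/(Real.exp π + π) * 2 * 1 := by
          apply mul_le_mul _ he1 he0.le (by positivity)
          apply mul_le_mul le_rfl h1s (by linarith) hc.le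
        calc π/(Real.exp π + π) * (1 + s) * Real.exp (-π * s)
            ≤ π/(Real.exp π + π) * 2 * 1 := step
          _ = 2*π/(Real.exp π + π) := by ring
      linarith
    · have hub : Real.sinh (π * s) ≤ Real.exp (π * s) / 2 := by
        rw [Real.sinh_eq]
        nlinarith [Real.exp_pos (-(π*s))]
      have key : 2 * π * s * Real.exp (-π * s) ≤ π * s / Real.sinh (π * s) := by
        calc 2 * π * s * Real.exp (-π * s) = π * s / (Real.exp (π * s) / 2) := by
              rw [show -π * s = -(π*s) by ring, Real.exp_neg]
              field_simp
          _ ≤ π * s / Real.sinh (π * s) := by gcongr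
      have hfac : π/(Real.exp π + π) * (1 + s) * Real.exp (-π * s) ≤
          2 * π * s * Real.exp (-π * s) := by
        have he := Real.exp_pos (-π * s)
        have hπ1 : (1:ℝ) < π := by nlinarith [Real.pi_gt_three]
        have hmain : π/(Real.exp π + π) * (1 + s) ≤ 2 * π * s := by
          have h1 : (1:ℝ) + s ≤ 2 * s := by linarith
          have h2 : π/(Real.exp π + π) * (1 + s) ≤ 1 * (2 * s) := by
            apply mul_le_mul hc1 h1 (by linarith) (by norm_num)
          nlinarith
        exact mul_le_mul_of_nonneg_right hmain he.le
      linarith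

lemma bound_half' (y : ℝ) :
    ‖GammaC ((1 + Complex.I * (y:ℂ))/2)‖ ≤ 2 * Real.exp (-(π/4) * |y|) := by
  rw [show ((1 + Complex.I * (y:ℂ))/2) = 1/2 + ((y/2 : ℝ):ℂ) * Complex.I by push_cast; ring]
  calc ‖GammaC (1/2 + ((y/2 : ℝ):ℂ) * Complex.I)‖
      ≤ 2 * Real.exp (-(π/2) * |y/2|) := bound_half _
    _ = 2 * Real.exp (-(π/4) * |y|) := by
        rw [abs_div, (by norm_num : |(2:ℝ)| = 2)]
        ring_nf

lemma bnd2 (e1 e2 : ℤ) (a b : ℝ) :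
    ‖GammaC ((1 + ((e1:ℝ):ℂ) * (a:ℂ) * Complex.I)/2 + ((e2:ℝ):ℂ) * (b:ℂ) * Complex.I)‖
      ≤ 2 * Real.exp (-(π/2) * |(e1:ℝ)*a/2 + (e2:ℝ)*b|) := by
  rw [show ((1 + ((e1:ℝ):ℂ) * (a:ℂ) * Complex.I)/2 + ((e2:ℝ):ℂ) * (b:ℂ) * Complex.I)
      = 1/2 + (((e1:ℝ)*a/2 + (e2:ℝ)*b : ℝ):ℂ) * Complex.I by push_cast; ring]
  exact bound_half _

lemma mulexp (c d a b : ℝ) : (c * Real.exp a) * (d * Real.exp b) = (c*d) * Real.exp (a+b) := by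
  rw [Real.exp_add]; ring

lemma exp_ident (tj tf tg t : ℝ) :
    (-(π/4) * (2 * (|t+tg+tj| + |t+tg-tj| + |t-tg+tj| + |t-tg-tj|))) +
      (-(π/2) * (2*tj + 2*|tj/2+tf| + 2*|tj/2-tf|)) =
      -π * Q1 tj tf tg |t| + (-π * |t| + -π*tg + -π*tj + (-π*tf + -π*tf) + -π*tj) := by
  simp only [Q1]
  rw [show |t+tg+tj| = |tj+tg+t| by congr 1; ring,
    show |t+tg-tj| = |tj-tg-t| by rw [show t+tg-tj = -(tj-tg-t) by ring, abs_neg],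
    show |t-tg+tj| = |tj-tg+t| by congr 1; ring,
    show |t-tg-tj| = |tj+tg-t| by rw [show t-tg-tj = -(tj+tg-t) by ring, abs_neg]]
  rcases abs_cases t with ⟨h, _⟩ | ⟨h, _⟩
  · rw [h]; ring_nf
  · rw [h]
    rw [show tj+tg+ -t = tj+tg-t by ring, show tj+tg- -t = tj+tg+t by ring,
      show tj-tg+ -t = tj-tg-t by ring, show tj-tg- -t = tj-tg+t by ring]
    ring_nf

lemma final_eq (tj tf tg t : ℝ) (htj0 : 0 < tj) (htf0 : 0 < tf) (htg0 : 0 < tg) :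
    (256 * Real.exp (-(π/4) * (2 * (|t+tg+tj| + |t+tg-tj| + |t-tg+tj| + |t-tg-tj|)))) *
    (256 * Real.exp (-(π/2) * (2*tj + 2*|tj/2+tf| + 2*|tj/2-tf|))) =
    (Real.sqrt (2048 * π^4 * (Real.exp π + π)) * Real.exp (-(π / 2) * Q1 tj tf tg |t|) /
      (tj * tf * (1 + |t|) ^ ((1 : ℝ) / 2) * tg ^ ((1 : ℝ) / 2)))^2 *
    ((π/(Real.exp π + π) * (1 + |t|) * Real.exp (-π * |t|) *
      (2/π * tg * Real.exp (-π * tg)) * (2/π * tj * Real.exp (-π * tj))) *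
     ((2/π * tf * Real.exp (-π * tf))^2 * (2/π * tj * Real.exp (-π * tj)))) := by
  have hπ := Real.pi_pos
  have hs0 := abs_nonneg t
  have heπ := Real.exp_pos π
  have hu : (((1+|t|) ^ ((1:ℝ)/2))^2 : ℝ) = 1+|t| := by
    rw [← Real.rpow_natCast _ 2, ← Real.rpow_mul (by positivity)]; norm_num
  have hv : ((tg ^ ((1:ℝ)/2))^2 : ℝ) = tg := by
    rw [← Real.rpow_natCast _ 2, ← Real.rpow_mul htg0.le]; norm_num
  have hK : (Real.sqrt (2048 * π^4 * (Real.exp π + π)))^2 = 2048 * π^4 * (Real.exp π + π) :=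
    Real.sq_sqrt (by positivity)
  have hexp2 : (Real.exp (-(π/2) * Q1 tj tf tg |t|))^2 = Real.exp (-π * Q1 tj tf tg |t|) := by
    rw [pow_two, ← Real.exp_add]; congr 1; ring
  rw [mulexp, exp_ident tj tf tg t]
  rw [div_pow, mul_pow, mul_pow, mul_pow, mul_pow, hu, hv, hK, hexp2]
  rw [Real.exp_add, Real.exp_add, Real.exp_add, Real.exp_add, Real.exp_add, Real.exp_add]
  have h1s : (0:ℝ) < 1 + |t| := by linarith
  have heπ2 : (0:ℝ) < Real.exp π + π := by positivity
  field_simp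
  ring

lemma combine (a b c d R : ℝ) (ha : 0 ≤ a) (hc : 0 ≤ c) (hb : 0 < b) (hd : 0 < d) (hR : 0 ≤ R)
    (h : a * c ≤ R^2 * (b * d)) :
    (a/b)^((1:ℝ)/2) * (c/d)^((1:ℝ)/2) ≤ R := by
  rw [← Real.mul_rpow (by positivity) (by positivity), div_mul_div_comm]
  have h2 : a*c/(b*d) ≤ R^2 := by
    rw [div_le_iff₀ (by positivity)]
    linarith
  calc (a*c/(b*d))^((1:ℝ)/2) ≤ (R^2)^((1:ℝ)/2) :=
        Real.rpow_le_rpow (by positivity) h2 (by norm_num)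
    _ = R := by
        rw [← Real.rpow_natCast R 2, ← Real.rpow_mul hR]
        norm_num

/-- Archimedean bound for the triple product factors with one Eisenstein parameter `t`:
`(N₁/D₁)^{1/2} (N₂/D₂)^{1/2} ≤ C e^{-(π/2) Q₁(t_j; t_f, t_g, |t|)} / (t_j t_f (1+|t|)^{1/2} t_g^{1/2})`. -/
theorem archimedean_bound_eisenstein_triple_product :
    ∃ C : ℝ, ∀ tj tf tg : ℝ, 1 ≤ tj → 1 ≤ tf → 1 ≤ tg → ∀ t : ℝ,
      ((∏ e1 ∈ signs, ∏ e2 ∈ signs, ∏ e3 ∈ signs,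
          ‖GammaC ((1 + Complex.I * ((e1 * t + e2 * tg + e3 * tj : ℝ) : ℂ)) / 2)‖) /
        (‖Complex.Gamma (1 + (t : ℂ) * Complex.I)‖ ^ 2 *
          ‖GammaC (1 + (tg : ℂ) * Complex.I)‖ ^ 2 *
          ‖GammaC (1 + (tj : ℂ) * Complex.I)‖ ^ 2)) ^ ((1 : ℝ) / 2) *
      ((‖GammaC ((1 + (tj : ℂ) * Complex.I) / 2)‖ ^ 2 *
          ‖GammaC ((1 - (tj : ℂ) * Complex.I) / 2)‖ ^ 2 *
          ∏ e1 ∈ signs, ∏ e2 ∈ signs,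
            ‖GammaC ((1 + ((e1 : ℝ) : ℂ) * (tj : ℂ) * Complex.I) / 2 +
              ((e2 : ℝ) : ℂ) * (tf : ℂ) * Complex.I)‖) /
        (‖GammaC (1 + (tf : ℂ) * Complex.I)‖ ^ 4 *
          ‖GammaC (1 + (tj : ℂ) * Complex.I)‖ ^ 2)) ^ ((1 : ℝ) / 2) ≤
      C * Real.exp (-(π / 2) * Q1 tj tf tg |t|) /
        (tj * tf * (1 + |t|) ^ ((1 : ℝ) / 2) * tg ^ ((1 : ℝ) / 2)) := by
  refine ⟨Real.sqrt (2048 * π^4 * (Real.exp π + π)), fun tj tf tg htj htf htg t => ?_⟩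
  have hπ := Real.pi_pos
  have htj0 : (0:ℝ) < tj := by linarith
  have htf0 : (0:ℝ) < tf := by linarith
  have htg0 : (0:ℝ) < tg := by linarith
  have hs0 : (0:ℝ) ≤ |t| := abs_nonneg t
  have h1t := lower_gamma t
  have h1g := lower_one tg htg0
  have h1j := lower_one tj htj0
  have h1f := lower_one tf htf0
  have hLBg : (0:ℝ) < 2/π * tg * Real.exp (-π * tg) := by positivity
  have hLBj : (0:ℝ) < 2/π * tj * Real.exp (-π * tj) := by positivity
  have hLBf : (0:ℝ) < 2/π * tf * Real.exp (-π * tf) := by positivity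
  have hb : π/(Real.exp π + π) * (1 + |t|) * Real.exp (-π * |t|) *
        (2/π * tg * Real.exp (-π * tg)) * (2/π * tj * Real.exp (-π * tj)) ≤
      ‖Complex.Gamma (1 + (t : ℂ) * Complex.I)‖ ^ 2 *
        ‖GammaC (1 + (tg : ℂ) * Complex.I)‖ ^ 2 *
        ‖GammaC (1 + (tj : ℂ) * Complex.I)‖ ^ 2 := by
    apply mul_le_mul (mul_le_mul h1t h1g hLBg.le (by positivity)) h1j hLBj.le (by positivity)
  have hd : (2/π * tf * Real.exp (-π * tf))^2 * (2/π * tj * Real.exp (-π * tj)) ≤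
      ‖GammaC (1 + (tf : ℂ) * Complex.I)‖ ^ 4 *
        ‖GammaC (1 + (tj : ℂ) * Complex.I)‖ ^ 2 := by
    have h4 : (2/π * tf * Real.exp (-π * tf))^2 ≤
        ‖GammaC (1 + (tf : ℂ) * Complex.I)‖ ^ 4 := by
      have h := pow_le_pow_left₀ hLBf.le h1f 2
      calc (2/π * tf * Real.exp (-π * tf))^2
          ≤ (‖GammaC (1 + (tf : ℂ) * Complex.I)‖ ^ 2)^2 := h
        _ = ‖GammaC (1 + (tf : ℂ) * Complex.I)‖ ^ 4 := by ring
    apply mul_le_mul h4 h1j hLBj.le (by positivity)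
  have hA : (∏ e1 ∈ signs, ∏ e2 ∈ signs, ∏ e3 ∈ signs,
        ‖GammaC ((1 + Complex.I * ((e1 * t + e2 * tg + e3 * tj : ℝ) : ℂ)) / 2)‖)
      ≤ 256 * Real.exp (-(π/4) * (2 * (|t+tg+tj| + |t+tg-tj| + |t-tg+tj| + |t-tg-tj|))) := by
    calc (∏ e1 ∈ signs, ∏ e2 ∈ signs, ∏ e3 ∈ signs,
          ‖GammaC ((1 + Complex.I * ((e1 * t + e2 * tg + e3 * tj : ℝ) : ℂ)) / 2)‖)
        ≤ ∏ e1 ∈ signs, ∏ e2 ∈ signs, ∏ e3 ∈ signs,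
            (2 * Real.exp (-(π/4) * |(e1:ℝ)*t+(e2:ℝ)*tg+(e3:ℝ)*tj|)) := by
          refine Finset.prod_le_prod (fun _ _ => Finset.prod_nonneg fun _ _ =>
              Finset.prod_nonneg fun _ _ => norm_nonneg _) (fun e1 _ => ?_)
          refine Finset.prod_le_prod (fun _ _ => Finset.prod_nonneg fun _ _ =>
              norm_nonneg _) (fun e2 _ => ?_)
          refine Finset.prod_le_prod (fun _ _ => norm_nonneg _) (fun e3 _ => ?_)
          exact bound_half' _
      _ = 256 * Real.exp (-(π/4) * (2 * (|t+tg+tj| + |t+tg-tj| + |t-tg+tj| + |t-tg-tj|))) := by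
          simp only [signs, Finset.prod_pair (show (-1:ℤ) ≠ 1 by decide)]
          push_cast
          rw [show |(-1:ℝ)*t + -1*tg + -1*tj| = |t+tg+tj| by
                rw [show (-1:ℝ)*t + -1*tg + -1*tj = -(t+tg+tj) by ring, abs_neg],
            show |(-1:ℝ)*t + -1*tg + 1*tj| = |t+tg-tj| by
                rw [show (-1:ℝ)*t + -1*tg + 1*tj = -(t+tg-tj) by ring, abs_neg],
            show |(-1:ℝ)*t + 1*tg + -1*tj| = |t-tg+tj| by
                rw [show (-1:ℝ)*t + 1*tg + -1*tj = -(t-tg+tj) by ring, abs_neg],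
            show |(-1:ℝ)*t + 1*tg + 1*tj| = |t-tg-tj| by
                rw [show (-1:ℝ)*t + 1*tg + 1*tj = -(t-tg-tj) by ring, abs_neg],
            show |(1:ℝ)*t + -1*tg + -1*tj| = |t-tg-tj| by congr 1; ring,
            show |(1:ℝ)*t + -1*tg + 1*tj| = |t-tg+tj| by congr 1; ring,
            show |(1:ℝ)*t + 1*tg + -1*tj| = |t+tg-tj| by congr 1; ring,
            show |(1:ℝ)*t + 1*tg + 1*tj| = |t+tg+tj| by congr 1; ring]
          repeat rw [mulexp]
          norm_num
          congr 1
          ring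
  have hC : (‖GammaC ((1 + (tj : ℂ) * Complex.I) / 2)‖ ^ 2 *
        ‖GammaC ((1 - (tj : ℂ) * Complex.I) / 2)‖ ^ 2 *
        ∏ e1 ∈ signs, ∏ e2 ∈ signs,
          ‖GammaC ((1 + ((e1 : ℝ) : ℂ) * (tj : ℂ) * Complex.I) / 2 +
            ((e2 : ℝ) : ℂ) * (tf : ℂ) * Complex.I)‖)
      ≤ 256 * Real.exp (-(π/2) * (2*tj + 2*|tj/2+tf| + 2*|tj/2-tf|)) := by
    have hq1 : ‖GammaC ((1 + (tj : ℂ) * Complex.I) / 2)‖ ≤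
        2 * Real.exp (-(π/4) * tj) := by
      rw [show ((1 + (tj:ℂ) * Complex.I)/2) = 1/2 + ((tj/2 : ℝ):ℂ) * Complex.I by push_cast; ring]
      calc ‖GammaC (1/2 + ((tj/2 : ℝ):ℂ) * Complex.I)‖
          ≤ 2 * Real.exp (-(π/2) * |tj/2|) := bound_half _
        _ = 2 * Real.exp (-(π/4) * tj) := by
            rw [abs_of_pos (by linarith : (0:ℝ) < tj/2)]; ring_nf
    have hq2 : ‖GammaC ((1 - (tj : ℂ) * Complex.I) / 2)‖ ≤
        2 * Real.exp (-(π/4) * tj) := by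
      rw [show ((1 - (tj:ℂ) * Complex.I)/2) = 1/2 + ((-(tj/2) : ℝ):ℂ) * Complex.I by
        push_cast; ring]
      calc ‖GammaC (1/2 + ((-(tj/2) : ℝ):ℂ) * Complex.I)‖
          ≤ 2 * Real.exp (-(π/2) * |-(tj/2)|) := bound_half _
        _ = 2 * Real.exp (-(π/4) * tj) := by
            rw [abs_neg, abs_of_pos (by linarith : (0:ℝ) < tj/2)]; ring_nf
    have hprod : (∏ e1 ∈ signs, ∏ e2 ∈ signs,
          ‖GammaC ((1 + ((e1 : ℝ) : ℂ) * (tj : ℂ) * Complex.I) / 2 +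
            ((e2 : ℝ) : ℂ) * (tf : ℂ) * Complex.I)‖)
        ≤ 16 * Real.exp (-(π/2) * (2*|tj/2+tf| + 2*|tj/2-tf|)) := by
      calc (∏ e1 ∈ signs, ∏ e2 ∈ signs,
          ‖GammaC ((1 + ((e1 : ℝ) : ℂ) * (tj : ℂ) * Complex.I) / 2 +
            ((e2 : ℝ) : ℂ) * (tf : ℂ) * Complex.I)‖)
          ≤ ∏ e1 ∈ signs, ∏ e2 ∈ signs, (2 * Real.exp (-(π/2) * |(e1:ℝ)*tj/2 + (e2:ℝ)*tf|)) := by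
            refine Finset.prod_le_prod (fun _ _ => Finset.prod_nonneg fun _ _ =>
                norm_nonneg _)
              (fun e1 _ => Finset.prod_le_prod (fun _ _ => norm_nonneg _)
                (fun e2 _ => bnd2 e1 e2 tj tf))
        _ = 16 * Real.exp (-(π/2) * (2*|tj/2+tf| + 2*|tj/2-tf|)) := by
            simp only [signs, Finset.prod_pair (show (-1:ℤ) ≠ 1 by decide)]
            push_cast
            rw [show |(-1:ℝ)*tj/2 + -1*tf| = |tj/2+tf| by
                  rw [show (-1:ℝ)*tj/2 + -1*tf = -(tj/2+tf) by ring, abs_neg],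
              show |(-1:ℝ)*tj/2 + 1*tf| = |tj/2-tf| by
                  rw [show (-1:ℝ)*tj/2 + 1*tf = -(tj/2-tf) by ring, abs_neg],
              show |(1:ℝ)*tj/2 + -1*tf| = |tj/2-tf| by congr 1; ring,
              show |(1:ℝ)*tj/2 + 1*tf| = |tj/2+tf| by congr 1; ring]
            repeat rw [mulexp]
            norm_num
            congr 1
            ring
    calc ‖GammaC ((1 + (tj : ℂ) * Complex.I) / 2)‖ ^ 2 *
          ‖GammaC ((1 - (tj : ℂ) * Complex.I) / 2)‖ ^ 2 *
          (∏ e1 ∈ signs, ∏ e2 ∈ signs,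
            ‖GammaC ((1 + ((e1 : ℝ) : ℂ) * (tj : ℂ) * Complex.I) / 2 +
              ((e2 : ℝ) : ℂ) * (tf : ℂ) * Complex.I)‖)
        ≤ (2 * Real.exp (-(π/4) * tj))^2 * (2 * Real.exp (-(π/4) * tj))^2 *
          (16 * Real.exp (-(π/2) * (2*|tj/2+tf| + 2*|tj/2-tf|))) := by
          apply mul_le_mul _ hprod (Finset.prod_nonneg fun _ _ => Finset.prod_nonneg
            fun _ _ => norm_nonneg _) (by positivity)
          apply mul_le_mul (pow_le_pow_left₀ (norm_nonneg _) hq1 2)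
            (pow_le_pow_left₀ (norm_nonneg _) hq2 2) (by positivity) (by positivity)
      _ = 256 * Real.exp (-(π/2) * (2*tj + 2*|tj/2+tf| + 2*|tj/2-tf|)) := by
          rw [pow_two]
          repeat rw [mulexp]
          norm_num
          congr 1
          ring
  apply combine _ _ _ _ _ (by positivity) (by positivity)
    (lt_of_lt_of_le (by positivity) hb) (lt_of_lt_of_le (by positivity) hd) (by positivity)
  calc (∏ e1 ∈ signs, ∏ e2 ∈ signs, ∏ e3 ∈ signs,
        ‖GammaC ((1 + Complex.I * ((e1 * t + e2 * tg + e3 * tj : ℝ) : ℂ)) / 2)‖) *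
      (‖GammaC ((1 + (tj : ℂ) * Complex.I) / 2)‖ ^ 2 *
        ‖GammaC ((1 - (tj : ℂ) * Complex.I) / 2)‖ ^ 2 *
        ∏ e1 ∈ signs, ∏ e2 ∈ signs,
          ‖GammaC ((1 + ((e1 : ℝ) : ℂ) * (tj : ℂ) * Complex.I) / 2 +
            ((e2 : ℝ) : ℂ) * (tf : ℂ) * Complex.I)‖)
      ≤ (256 * Real.exp (-(π/4) * (2 * (|t+tg+tj| + |t+tg-tj| + |t-tg+tj| + |t-tg-tj|)))) *
        (256 * Real.exp (-(π/2) * (2*tj + 2*|tj/2+tf| + 2*|tj/2-tf|))) := by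
        apply mul_le_mul hA hC (by positivity) (by positivity)
    _ = (Real.sqrt (2048 * π^4 * (Real.exp π + π)) * Real.exp (-(π / 2) * Q1 tj tf tg |t|) /
          (tj * tf * (1 + |t|) ^ ((1 : ℝ) / 2) * tg ^ ((1 : ℝ) / 2)))^2 *
        ((π/(Real.exp π + π) * (1 + |t|) * Real.exp (-π * |t|) *
          (2/π * tg * Real.exp (-π * tg)) * (2/π * tj * Real.exp (-π * tj))) *
         ((2/π * tf * Real.exp (-π * tf))^2 * (2/π * tj * Real.exp (-π * tj)))) :=
        final_eq tj tf tg t htj0 htf0 htg0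
    _ ≤ _ := by
        apply mul_le_mul_of_nonneg_left (mul_le_mul hb hd (by positivity) (by positivity))
          (by positivity)
end

section
/- Divisor sum over a thin annulus in an imaginary quadratic ring of integers: for every ε > 0 and every L > 0 there is a constant C (depending only on K, L, ε) such that for all t ≥ 2, ∑_{0 ≠ ω ∈ O_K, |L|ω| − t| ≤ t^{1/3}} σ₀(ω) ≤ C t^{4/3 + ε}. -/
open Real Complex NumberField

section AuxDivisorBound

open UniqueFactorizationMonoid

variable {K : Type*} [Field K] [NumberField K]

lemma span_dvd_span_iff (a b : 𝓞 K) :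
    (Ideal.span {a} ∣ Ideal.span {b}) ↔ a ∣ b := by
  rw [Ideal.dvd_iff_le, Ideal.span_singleton_le_span_singleton]

open scoped Classical in
lemma ideal_dvd_finite_and_card (I : Ideal (𝓞 K)) (hI : I ≠ 0) :
    Finite {J : Ideal (𝓞 K) // J ∣ I} ∧
      Nat.card {J : Ideal (𝓞 K) // J ∣ I} ≤
        ∏ p ∈ (normalizedFactors I).toFinset, ((normalizedFactors I).count p + 1) := by
  set T := normalizedFactors I with hT
  have hfac : ∀ J : {J : Ideal (𝓞 K) // J ∣ I}, normalizedFactors J.1 ≤ T := by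
    rintro ⟨J, hJ⟩
    have hJ0 : J ≠ 0 := by rintro rfl; exact hI (zero_dvd_iff.mp hJ)
    exact (dvd_iff_normalizedFactors_le_normalizedFactors hJ0 hI).mp hJ
  set Ψ : {J : Ideal (𝓞 K) // J ∣ I} →
      ((p : T.toFinset) → Fin (T.count p.1 + 1)) :=
    fun J => fun p => ⟨(normalizedFactors J.1).count p.1,
      Nat.lt_succ_of_le (Multiset.count_le_of_le p.1 (hfac J))⟩ with hΨ
  have hinj : Function.Injective Ψ := by
    intro J1 J2 h
    have hJ10 : J1.1 ≠ 0 := by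
      rintro h0; exact hI (zero_dvd_iff.mp (h0 ▸ J1.2))
    have hJ20 : J2.1 ≠ 0 := by
      rintro h0; exact hI (zero_dvd_iff.mp (h0 ▸ J2.2))
    have hnf : normalizedFactors J1.1 = normalizedFactors J2.1 := by
      apply Multiset.ext.mpr
      intro p
      by_cases hp : p ∈ T.toFinset
      · have := congrArg Fin.val (congrFun h ⟨p, hp⟩)
        simpa [hΨ] using this
      · have hp0 : T.count p = 0 :=
          Multiset.count_eq_zero.mpr (fun hmem => hp (Multiset.mem_toFinset.mpr hmem))
        have h1 := Multiset.count_le_of_le p (hfac J1)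
        have h2 := Multiset.count_le_of_le p (hfac J2)
        omega
    have e1 : (normalizedFactors J1.1).prod = J1.1 :=
      associated_iff_eq.mp (prod_normalizedFactors hJ10)
    have e2 : (normalizedFactors J2.1).prod = J2.1 :=
      associated_iff_eq.mp (prod_normalizedFactors hJ20)
    apply Subtype.ext
    rw [← e1, ← e2, hnf]
  refine ⟨Finite.of_injective Ψ hinj, ?_⟩
  calc Nat.card {J : Ideal (𝓞 K) // J ∣ I}
      ≤ Nat.card ((p : T.toFinset) → Fin (T.count p.1 + 1)) :=
        Nat.card_le_card_of_injective Ψ hinj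
    _ = ∏ p ∈ T.toFinset, (T.count p + 1) := by
        rw [Nat.card_eq_fintype_card, Fintype.card_pi]
        simp only [Fintype.card_fin]
        exact Finset.prod_coe_sort T.toFinset (fun p => T.count p + 1)

lemma small_primes_finite (M : ℕ) :
    Finite {p : Ideal (𝓞 K) // Prime p ∧ Ideal.absNorm p ≤ M} := by
  have hM0 : ((M.factorial : ℕ) : 𝓞 K) ≠ 0 := by
    exact_mod_cast Nat.cast_ne_zero.mpr M.factorial_pos.ne'
  have hspan : (Ideal.span {((M.factorial : ℕ) : 𝓞 K)} : Ideal (𝓞 K)) ≠ 0 := by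
    simpa [Ideal.span_singleton_eq_bot] using hM0
  have hfin := (ideal_dvd_finite_and_card _ hspan).1
  refine Finite.of_injective
    (fun p => (⟨p.1, ?_⟩ : {J : Ideal (𝓞 K) // J ∣ Ideal.span {((M.factorial : ℕ) : 𝓞 K)}}))
    ?_
  · obtain ⟨hp, hple⟩ := p.2
    have hp0 : p.1 ≠ 0 := hp.ne_zero
    have hpos : 0 < Ideal.absNorm p.1 := by
      rcases Nat.eq_zero_or_pos (Ideal.absNorm p.1) with h | h
      · exact absurd (Ideal.absNorm_eq_zero_iff.mp h) hp0
      · exact h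
    have hdvd : Ideal.absNorm p.1 ∣ M.factorial := Nat.dvd_factorial hpos hple
    have hmem : ((M.factorial : ℕ) : 𝓞 K) ∈ p.1 := by
      obtain ⟨c, hc⟩ := (Nat.cast_dvd_cast (α := 𝓞 K) hdvd)
      rw [hc]
      exact Ideal.mul_mem_right _ _ (Ideal.absNorm_mem p.1)
    rw [Ideal.dvd_iff_le, Ideal.span_le]
    simpa using hmem
  · intro p q h
    exact Subtype.ext (by simpa using congrArg Subtype.val h)

lemma linear_le_pow {r : ℝ} (hr : 1 < r) (e : ℕ) :
    (e + 1 : ℝ) ≤ (r / (r - 1)) * r ^ e := by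
  have h0 : 0 < r - 1 := by linarith
  have hb : 1 + (e : ℝ) * (r - 1) ≤ r ^ e := by
    have := one_add_mul_le_pow (a := r - 1) (by linarith) e
    simpa using this
  have he : (0:ℝ) ≤ (e : ℝ) := Nat.cast_nonneg e
  rw [div_mul_eq_mul_div, le_div_iff₀ h0]
  nlinarith [mul_le_mul_of_nonneg_left hb (by linarith : (0:ℝ) ≤ r), sq_nonneg (r - 1), mul_nonneg he (sq_nonneg (r-1))]

open scoped Classical in
lemma ideal_divisors_card_rpow (K : Type*) [Field K] [NumberField K] (δ : ℝ) (hδ : 0 < δ) :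
    ∃ C : ℝ, 1 ≤ C ∧ ∀ I : Ideal (𝓞 K), I ≠ 0 →
      (Nat.card {J : Ideal (𝓞 K) // J ∣ I} : ℝ) ≤ C * (Ideal.absNorm I : ℝ) ^ δ := by
  set r : ℝ := (2:ℝ) ^ δ with hrdef
  have hr1 : 1 < r := by
    have := Real.rpow_lt_rpow_of_exponent_lt (x := 2) (by norm_num) hδ
    simpa using this
  set c1 : ℝ := r / (r - 1) with hc1def
  have hc1 : 1 ≤ c1 := by
    rw [hc1def, le_div_iff₀ (by linarith)]; linarith
  set M : ℕ := ⌊(2:ℝ) ^ (1/δ)⌋₊ with hM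
  haveI := small_primes_finite (K := K) M
  set k : ℕ := Nat.card {p : Ideal (𝓞 K) // Prime p ∧ Ideal.absNorm p ≤ M} with hk
  refine ⟨c1 ^ k, one_le_pow₀ hc1, ?_⟩
  intro I hI
  obtain ⟨hfin, hcard⟩ := ideal_dvd_finite_and_card I hI
  set T := normalizedFactors I with hT
  set F := T.toFinset with hF
  have hprime : ∀ p ∈ F, Prime p := fun p hp =>
    prime_of_normalized_factor p (Multiset.mem_toFinset.mp hp)
  have hNp2 : ∀ p ∈ F, (2:ℝ) ≤ (Ideal.absNorm p : ℝ) := by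
    intro p hp
    have h0 : Ideal.absNorm p ≠ 0 := fun h =>
      (hprime p hp).ne_zero (Ideal.absNorm_eq_zero_iff.mp h)
    have h1 : Ideal.absNorm p ≠ 1 := fun h =>
      (hprime p hp).not_unit (by rw [Ideal.isUnit_iff]; exact Ideal.absNorm_eq_one_iff.mp h)
    have : 2 ≤ Ideal.absNorm p := by omega
    exact_mod_cast this
  have step1 : (Nat.card {J : Ideal (𝓞 K) // J ∣ I} : ℝ) ≤ ∏ p ∈ F, ((T.count p : ℝ) + 1) := by
    calc (Nat.card {J : Ideal (𝓞 K) // J ∣ I} : ℝ)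
        ≤ ((∏ p ∈ F, (T.count p + 1) : ℕ) : ℝ) := by exact_mod_cast hcard
      _ = ∏ p ∈ F, ((T.count p : ℝ) + 1) := by push_cast; rfl
  have step2 : ∀ p ∈ F, ((T.count p : ℝ) + 1) ≤
      (if Ideal.absNorm p ≤ M then c1 else 1) *
        ((Ideal.absNorm p : ℝ) ^ δ) ^ (T.count p) := by
    intro p hp
    by_cases hps : Ideal.absNorm p ≤ M
    · rw [if_pos hps]
      have h1 : ((T.count p : ℝ) + 1) ≤ c1 * r ^ (T.count p) := linear_le_pow hr1 _
      have h2 : r ^ (T.count p) ≤ ((Ideal.absNorm p : ℝ) ^ δ) ^ (T.count p) := by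
        apply pow_le_pow_left₀ (le_of_lt (by linarith : (0:ℝ) < r))
        exact Real.rpow_le_rpow (by norm_num) (hNp2 p hp) hδ.le
      exact h1.trans (mul_le_mul_of_nonneg_left h2 (by linarith))
    · rw [if_neg hps, one_mul]
      have hNp : (2:ℝ) ^ (1/δ) < (Ideal.absNorm p : ℝ) := by
        have hx : (2:ℝ)^(1/δ) < (M:ℝ) + 1 := Nat.lt_floor_add_one _
        have h' : (M:ℝ) + 1 ≤ (Ideal.absNorm p : ℝ) := by exact_mod_cast not_le.mp hps
        linarith
      have h2 : (2:ℝ) ≤ (Ideal.absNorm p : ℝ) ^ δ := by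
        have := Real.rpow_le_rpow (by positivity) hNp.le hδ.le
        rwa [← Real.rpow_mul (by norm_num), one_div_mul_cancel hδ.ne', Real.rpow_one] at this
      have h3 : ((T.count p : ℝ) + 1) ≤ 2 ^ (T.count p) := by
        have := Nat.lt_two_pow_self (n := T.count p)
        exact_mod_cast Nat.succ_le_of_lt this
      exact h3.trans (pow_le_pow_left₀ (by norm_num) h2 _)
  have step3 : ∏ p ∈ F, ((T.count p : ℝ) + 1) ≤
      (∏ p ∈ F, (if Ideal.absNorm p ≤ M then c1 else 1)) *
        ∏ p ∈ F, ((Ideal.absNorm p : ℝ) ^ δ) ^ (T.count p) := by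
    rw [← Finset.prod_mul_distrib]
    exact Finset.prod_le_prod (fun p hp => by positivity) step2
  have step4 : (∏ p ∈ F, (if Ideal.absNorm p ≤ M then c1 else 1)) ≤ c1 ^ k := by
    rw [Finset.prod_ite, Finset.prod_const, Finset.prod_const, one_pow, mul_one]
    apply pow_le_pow_right₀ hc1
    rw [← Nat.card_eq_finsetCard]
    refine Nat.card_le_card_of_injective
      (fun q => (⟨q.1, hprime q.1 (Finset.mem_filter.mp q.2).1,
        (Finset.mem_filter.mp q.2).2⟩ :
        {p : Ideal (𝓞 K) // Prime p ∧ Ideal.absNorm p ≤ M})) ?_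
    intro a b h
    exact Subtype.ext (by simpa using congrArg Subtype.val h)
  have step5 : ∏ p ∈ F, ((Ideal.absNorm p : ℝ) ^ δ) ^ (T.count p)
      = (Ideal.absNorm I : ℝ) ^ δ := by
    have e1 : ∀ p ∈ F, ((Ideal.absNorm p : ℝ) ^ δ) ^ (T.count p)
        = ((Ideal.absNorm p : ℝ) ^ (T.count p) : ℝ) ^ δ := by
      intro p hp
      rw [← Real.rpow_natCast ((Ideal.absNorm p : ℝ) ^ δ) (T.count p),
        ← Real.rpow_mul (by positivity), mul_comm,
        Real.rpow_mul (by positivity), Real.rpow_natCast]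
    rw [Finset.prod_congr rfl e1, Real.finset_prod_rpow _ _ (fun p _ => by positivity) δ]
    congr 1
    have e2 : I = T.prod := (associated_iff_eq.mp (prod_normalizedFactors hI)).symm
    calc ∏ p ∈ F, ((Ideal.absNorm p : ℝ)) ^ (T.count p)
        = ((∏ p ∈ F, (Ideal.absNorm p) ^ (T.count p) : ℕ) : ℝ) := by push_cast; rfl
      _ = ((Ideal.absNorm I : ℕ) : ℝ) := by
          rw [← Finset.prod_multiset_map_count T Ideal.absNorm, ← map_multiset_prod, ← e2]
  calc (Nat.card {J : Ideal (𝓞 K) // J ∣ I} : ℝ)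
      ≤ ∏ p ∈ F, ((T.count p : ℝ) + 1) := step1
    _ ≤ (∏ p ∈ F, (if Ideal.absNorm p ≤ M then c1 else 1)) *
        ∏ p ∈ F, ((Ideal.absNorm p : ℝ) ^ δ) ^ (T.count p) := step3
    _ ≤ c1 ^ k * (Ideal.absNorm I : ℝ) ^ δ := by
        rw [step5]
        exact mul_le_mul_of_nonneg_right step4 (by positivity)

lemma elem_dvd_finite_and_card [Finite ((𝓞 K)ˣ)] {x : 𝓞 K} (hx : x ≠ 0) :
    Finite {d : 𝓞 K // d ∣ x} ∧
      Nat.card {d : 𝓞 K // d ∣ x} ≤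
        Nat.card ((𝓞 K)ˣ) * Nat.card {J : Ideal (𝓞 K) // J ∣ Ideal.span {x}} := by
  classical
  have hspan : (Ideal.span {x} : Ideal (𝓞 K)) ≠ 0 := by
    simpa [Ideal.span_singleton_eq_bot] using hx
  haveI hfinJ : Finite {J : Ideal (𝓞 K) // J ∣ Ideal.span {x}} :=
    (ideal_dvd_finite_and_card _ hspan).1
  set gen : Ideal (𝓞 K) → 𝓞 K := fun J =>
    if h : Submodule.IsPrincipal J then @Submodule.IsPrincipal.generator _ _ _ _ _ J h else 0
    with hgendef
  have hgen : ∀ d : 𝓞 K, Associated (gen (Ideal.span {d})) d := by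
    intro d
    have hp : (Ideal.span {d} : Ideal (𝓞 K)).IsPrincipal := ⟨⟨d, rfl⟩⟩
    have : gen (Ideal.span {d}) = @Submodule.IsPrincipal.generator _ _ _ _ _ _ hp := by
      rw [hgendef]; exact dif_pos hp
    rw [this]
    exact Ideal.span_singleton_eq_span_singleton.mp (@Ideal.span_singleton_generator _ _ _ hp)
  set G : {d : 𝓞 K // d ∣ x} → ((𝓞 K)ˣ × {J : Ideal (𝓞 K) // J ∣ Ideal.span {x}}) :=
    fun d => ((hgen d.1).choose,
      ⟨Ideal.span {d.1}, (span_dvd_span_iff d.1 x).mpr d.2⟩) with hG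
  have hGinj : Function.Injective G := by
    intro d1 d2 h
    have h2 : Ideal.span {d1.1} = Ideal.span {d2.1} := by
      have := congrArg (fun z => (Prod.snd z).1) h
      simpa [hG] using this
    have h1 : (hgen d1.1).choose = (hgen d2.1).choose := by
      have := congrArg Prod.fst h
      simpa [hG] using this
    have e1 := (hgen d1.1).choose_spec
    have e2 := (hgen d2.1).choose_spec
    apply Subtype.ext
    rw [← e1, ← e2]
    exact congrArg₂ (fun (J : Ideal (𝓞 K)) (u : (𝓞 K)ˣ) => gen J * (u : 𝓞 K)) h2 h1
  refine ⟨Finite.of_injective G hGinj, ?_⟩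
  calc Nat.card {d : 𝓞 K // d ∣ x}
      ≤ Nat.card ((𝓞 K)ˣ × {J : Ideal (𝓞 K) // J ∣ Ideal.span {x}}) :=
        Nat.card_le_card_of_injective G hGinj
    _ = Nat.card ((𝓞 K)ˣ) * Nat.card {J : Ideal (𝓞 K) // J ∣ Ideal.span {x}} :=
        Nat.card_prod _ _

lemma norm_eq_normSq (h2 : Module.finrank ℚ K = 2) (φ : K →+* ℂ)
    (him : ∃ x : K, (φ x).im ≠ 0) (x : K) :
    ((Algebra.norm ℚ x : ℚ) : ℝ) = Complex.normSq (φ x) := by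
  classical
  set a : K →ₐ[ℚ] ℂ := φ.toRatAlgHom with ha
  set b : K →ₐ[ℚ] ℂ := ((starRingEnd ℂ).comp φ).toRatAlgHom with hb
  have haapp : ∀ y : K, a y = φ y := fun y => rfl
  have hbapp : ∀ y : K, b y = (starRingEnd ℂ) (φ y) := fun y => rfl
  have hab : a ≠ b := by
    obtain ⟨x₀, hx₀⟩ := him
    intro h
    have h1 : φ x₀ = (starRingEnd ℂ) (φ x₀) :=
      congrArg (fun f : K →ₐ[ℚ] ℂ => f x₀) h
    have h3 := congrArg Complex.im h1
    rw [Complex.conj_im] at h3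
    exact hx₀ (by linarith)
  have hcard : Fintype.card (K →ₐ[ℚ] ℂ) = 2 := by rw [AlgHom.card]; exact h2
  have huniv : ({a, b} : Finset (K →ₐ[ℚ] ℂ)) = Finset.univ :=
    Finset.eq_of_subset_of_card_le (Finset.subset_univ _)
      (by rw [Finset.card_univ, hcard, Finset.card_pair hab])
  have hnorm := Algebra.norm_eq_prod_embeddings ℚ ℂ x
  have hprod : ∏ σ : K →ₐ[ℚ] ℂ, σ x = a x * b x := by
    rw [show (Finset.univ : Finset (K →ₐ[ℚ] ℂ)) = {a, b} from huniv.symm,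
      Finset.prod_pair hab]
  have hc : algebraMap ℚ ℂ (Algebra.norm ℚ x) = (Complex.normSq (φ x) : ℂ) := by
    rw [hnorm, hprod, haapp, hbapp, Complex.mul_conj]
  have hcast : ((Algebra.norm ℚ x : ℚ) : ℂ) = ((Complex.normSq (φ x) : ℝ) : ℂ) := by
    rw [← hc]
    push_cast
    rfl
  exact_mod_cast hcast


open scoped Classical in
lemma card_le_of_norm_bounds [Finite ((𝓞 K)ˣ)] {P : 𝓞 K → Prop} [Fintype {ω : 𝓞 K // P ω}]
    {lo hi : ℕ} (hlo : 1 ≤ lo) {C₀ δ : ℝ} (hδ : 0 ≤ δ) (hC₀0 : 0 ≤ C₀)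
    (hC₀ : ∀ I : Ideal (𝓞 K), I ≠ 0 →
      (Nat.card {J : Ideal (𝓞 K) // J ∣ I} : ℝ) ≤ C₀ * (Ideal.absNorm I : ℝ) ^ δ)
    (hP : ∀ ω : 𝓞 K, P ω →
      lo ≤ Ideal.absNorm (Ideal.span {ω}) ∧ Ideal.absNorm (Ideal.span {ω}) ≤ hi)
    (hnorm2 : ∀ n : ℕ, Ideal.absNorm (Ideal.span {((n:ℕ) : 𝓞 K)}) = n ^ 2) :
    (Fintype.card {ω : 𝓞 K // P ω} : ℝ) ≤
      ((Finset.Icc lo hi).card : ℝ) *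
        ((Nat.card ((𝓞 K)ˣ) : ℝ) * (C₀ * (((hi:ℝ)^2) : ℝ) ^ δ)) := by
  set f : {ω : 𝓞 K // P ω} → ℕ := fun ω => Ideal.absNorm (Ideal.span {ω.1}) with hf
  have hmem : ∀ ω : {ω : 𝓞 K // P ω}, ω ∈ Finset.univ → f ω ∈ Finset.Icc lo hi := by
    intro ω _
    rcases hP ω.1 ω.2 with ⟨h1, h2⟩
    exact Finset.mem_Icc.mpr ⟨h1, h2⟩
  have hcardeq := Finset.card_eq_sum_card_fiberwise hmem
  rw [Finset.card_univ] at hcardeq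
  have hfiber : ∀ n ∈ Finset.Icc lo hi,
      ((Finset.univ.filter (fun ω : {ω : 𝓞 K // P ω} => f ω = n)).card : ℝ) ≤
        (Nat.card ((𝓞 K)ˣ) : ℝ) * (C₀ * (((hi:ℝ)^2) : ℝ) ^ δ) := by
    intro n hn
    obtain ⟨hn1, hn2⟩ := Finset.mem_Icc.mp hn
    have hn0 : ((n:ℕ) : 𝓞 K) ≠ 0 := Nat.cast_ne_zero.mpr (by omega)
    obtain ⟨hfinD, hcardD⟩ := elem_dvd_finite_and_card (K := K) hn0
    haveI := hfinD
    have hspan0 : (Ideal.span {((n:ℕ) : 𝓞 K)} : Ideal (𝓞 K)) ≠ 0 := by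
      simpa [Ideal.span_singleton_eq_bot] using hn0
    have hJ := hC₀ _ hspan0
    rw [hnorm2 n] at hJ
    have e1 : (Finset.univ.filter (fun ω : {ω : 𝓞 K // P ω} => f ω = n)).card
        = Nat.card {ω : {ω : 𝓞 K // P ω} // f ω = n} := by
      rw [Nat.card_eq_fintype_card, Fintype.card_subtype]
    have e2 : Nat.card {ω : {ω : 𝓞 K // P ω} // f ω = n} ≤
        Nat.card {d : 𝓞 K // d ∣ ((n:ℕ) : 𝓞 K)} := by
      refine Nat.card_le_card_of_injective (fun ω => ⟨ω.1.1, ?_⟩) ?_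
      · have hmem2 := Ideal.absNorm_mem (Ideal.span {ω.1.1})
        rw [show Ideal.absNorm (Ideal.span {ω.1.1}) = n from ω.2] at hmem2
        exact Ideal.mem_span_singleton.mp hmem2
      · intro a b h
        exact Subtype.ext (Subtype.ext (by simpa using congrArg Subtype.val h))
    calc ((Finset.univ.filter (fun ω : {ω : 𝓞 K // P ω} => f ω = n)).card : ℝ)
        = (Nat.card {ω : {ω : 𝓞 K // P ω} // f ω = n} : ℝ) := by exact_mod_cast e1
      _ ≤ (Nat.card {d : 𝓞 K // d ∣ ((n:ℕ) : 𝓞 K)} : ℝ) := by exact_mod_cast e2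
      _ ≤ (Nat.card ((𝓞 K)ˣ) : ℝ) *
          (Nat.card {J : Ideal (𝓞 K) // J ∣ Ideal.span {((n:ℕ) : 𝓞 K)}} : ℝ) := by
            exact_mod_cast hcardD
      _ ≤ (Nat.card ((𝓞 K)ˣ) : ℝ) * (C₀ * (((hi:ℝ)^2) : ℝ) ^ δ) := by
          apply mul_le_mul_of_nonneg_left ?_ (Nat.cast_nonneg _)
          refine hJ.trans ?_
          apply mul_le_mul_of_nonneg_left ?_ hC₀0
          apply Real.rpow_le_rpow (by positivity) ?_ hδ
          push_cast
          exact pow_le_pow_left₀ (Nat.cast_nonneg _) (Nat.cast_le.mpr hn2) 2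
  calc (Fintype.card {ω : 𝓞 K // P ω} : ℝ)
      = ∑ n ∈ Finset.Icc lo hi,
          ((Finset.univ.filter (fun ω : {ω : 𝓞 K // P ω} => f ω = n)).card : ℝ) := by
        rw [hcardeq]; push_cast; rfl
    _ ≤ ∑ _n ∈ Finset.Icc lo hi,
          (Nat.card ((𝓞 K)ˣ) : ℝ) * (C₀ * (((hi:ℝ)^2) : ℝ) ^ δ) :=
        Finset.sum_le_sum hfiber
    _ = ((Finset.Icc lo hi).card : ℝ) *
          ((Nat.card ((𝓞 K)ˣ) : ℝ) * (C₀ * (((hi:ℝ)^2) : ℝ) ^ δ)) := by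
        rw [Finset.sum_const, nsmul_eq_mul]


end AuxDivisorBound

/-- The divisor function on the ring of integers of a number field `K`:
`σ₀(ω) = (1/#O_K^×) · #{d ∈ O_K : d ∣ ω}`. -/
noncomputable def sigma0 (K : Type*) [Field K] [NumberField K] (ω : 𝓞 K) : ℝ :=
  (Nat.card {d : 𝓞 K // d ∣ ω} : ℝ) / (Nat.card ((𝓞 K)ˣ) : ℝ)

set_option maxHeartbeats 1000000

/-- Divisor sum over a thin annulus in an imaginary quadratic ring of integers:
`∑_{0 ≠ ω ∈ O_K, |L|ω| − t| ≤ t^{1/3}} σ₀(ω) ≤ C t^{4/3 + ε}` for all `t ≥ 2`. -/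
theorem divisor_sum_thin_annulus (K : Type*) [Field K] [NumberField K]
    (h2 : Module.finrank ℚ K = 2) (φ : K →+* ℂ) (him : ∃ x : K, (φ x).im ≠ 0)
    (ε : ℝ) (hε : 0 < ε) (L : ℝ) (hL : 0 < L) :
    ∃ C : ℝ, 0 < C ∧ ∀ t : ℝ, 2 ≤ t →
      ∑' ω : {ω : 𝓞 K // ω ≠ 0 ∧ |L * ‖φ (ω : K)‖ - t| ≤ t ^ ((1 : ℝ) / 3)},
          sigma0 K (ω : 𝓞 K) ≤
        C * t ^ ((4 : ℝ) / 3 + ε) := by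
  classical
  by_cases hufin : Finite ((𝓞 K)ˣ)
  swap
  · -- infinite unit group : sigma0 is identically zero
    refine ⟨1, one_pos, fun t ht => ?_⟩
    haveI : Infinite ((𝓞 K)ˣ) := not_finite_iff_infinite.mp hufin
    have hu0 : (Nat.card ((𝓞 K)ˣ) : ℝ) = 0 := by
      rw [Nat.card_eq_zero_of_infinite]; norm_num
    have hz : ∀ ω : {ω : 𝓞 K // ω ≠ 0 ∧
        |L * ‖φ (ω : K)‖ - t| ≤ t ^ ((1 : ℝ) / 3)},
        sigma0 K (ω : 𝓞 K) = 0 := by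
      intro ω; rw [sigma0, hu0, div_zero]
    rw [tsum_congr hz, tsum_zero, one_mul]
    positivity
  · haveI := hufin
    set u : ℕ := Nat.card ((𝓞 K)ˣ) with hu
    have hu1 : 1 ≤ u := Nat.card_pos
    have hu0 : (0:ℝ) < (u:ℝ) := by exact_mod_cast hu1
    set δ : ℝ := ε / 6 with hδdef
    have hδ : 0 < δ := by positivity
    obtain ⟨C₀, hC₀1, hC₀⟩ := ideal_divisors_card_rpow K δ hδ
    have hC₀0 : 0 < C₀ := lt_of_lt_of_le one_pos hC₀1
    have hrank : Module.finrank ℤ (𝓞 K) = 2 := by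
      rw [NumberField.RingOfIntegers.rank]; exact h2
    -- norm of a natural number n in 𝓞 K
    have hspanNorm : ∀ n : ℕ, Ideal.absNorm (Ideal.span {((n:ℕ) : 𝓞 K)}) = n ^ 2 := by
      intro n
      rw [Ideal.absNorm_span_singleton,
        show ((n:ℕ) : 𝓞 K) = algebraMap ℤ (𝓞 K) (n : ℤ) by simp]
      rw [Algebra.norm_algebraMap_of_basis (NumberField.RingOfIntegers.basis K)]
      rw [show Fintype.card (Module.Free.ChooseBasisIndex ℤ (𝓞 K)) = 2 from
        (Module.finrank_eq_card_chooseBasisIndex ℤ (𝓞 K)).symm.trans hrank]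
      simp [Int.natAbs_pow]
    -- absNorm of the principal ideal of ω equals normSq (φ ω)
    have hnormSq : ∀ ω : 𝓞 K,
        ((Ideal.absNorm (Ideal.span {ω}) : ℕ) : ℝ) = Complex.normSq (φ (ω : K)) := by
      intro ω
      have h1 : ((Algebra.norm ℤ ω : ℤ) : ℝ) = Complex.normSq (φ (ω : K)) := by
        have := norm_eq_normSq h2 φ him (ω : K)
        rw [← Algebra.coe_norm_int ω] at this
        exact_mod_cast this
      rw [Ideal.absNorm_span_singleton, Nat.cast_natAbs, Int.cast_abs, h1,
        _root_.abs_of_nonneg (Complex.normSq_nonneg _)]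
    refine ⟨(4 / L^2 + 1) * ((u:ℝ) * C₀^2 * (4 / L^2) ^ (ε/2)), by positivity,
      fun t ht => ?_⟩
    have ht0 : (0:ℝ) < t := by linarith
    have ht1 : (1:ℝ) ≤ t := by linarith
    set s : ℝ := t ^ ((1:ℝ)/3) with hs
    have hs0 : 0 < s := Real.rpow_pos_of_pos ht0 _
    have hst : s < t := by
      have := Real.rpow_lt_rpow_of_exponent_lt (x := t) (by linarith) (by norm_num : (1:ℝ)/3 < 1)
      rwa [Real.rpow_one] at this
    set A : ℝ := ((t - s)/L)^2 with hA
    set B : ℝ := ((t + s)/L)^2 with hB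
    have hts : 0 < t - s := by linarith
    have hA0 : 0 < A := pow_pos (div_pos hts hL) 2
    have hB0 : 0 < B := pow_pos (div_pos (by linarith) hL) 2
    have hAB : A ≤ B := by
      apply pow_le_pow_left₀ (div_nonneg hts.le hL.le)
      gcongr
      linarith
    set lo : ℕ := ⌈A⌉₊ with hlo
    set hi : ℕ := ⌊B⌋₊ with hhi
    have hlo1 : 1 ≤ lo := Nat.one_le_iff_ne_zero.mpr (by
      intro h
      have := Nat.ceil_pos.mpr hA0
      omega)
    -- annulus membership gives bounds on the norm
    have hannulus : ∀ ω : 𝓞 K, ω ≠ 0 →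
        |L * ‖φ (ω : K)‖ - t| ≤ s →
        lo ≤ Ideal.absNorm (Ideal.span {ω}) ∧ Ideal.absNorm (Ideal.span {ω}) ≤ hi := by
      intro ω hω hab
      obtain ⟨hl, hr⟩ := abs_le.mp hab
      have habs1 : (t - s)/L ≤ ‖φ (ω : K)‖ := by
        rw [div_le_iff₀ hL]; nlinarith [norm_nonneg (φ (ω : K))]
      have habs2 : ‖φ (ω : K)‖ ≤ (t + s)/L := by
        rw [le_div_iff₀ hL]; nlinarith [norm_nonneg (φ (ω : K))]
      have hsq : A ≤ Complex.normSq (φ (ω : K)) ∧ Complex.normSq (φ (ω : K)) ≤ B := by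
        rw [← Complex.sq_norm]
        constructor
        · apply pow_le_pow_left₀ (by positivity) habs1
        · apply pow_le_pow_left₀ (norm_nonneg _) habs2
      constructor
      · rw [hlo, Nat.ceil_le, hnormSq ω]; exact hsq.1
      · rw [hhi, Nat.le_floor_iff hB0.le, hnormSq ω]; exact hsq.2
    -- the index type is finite
    set Nf : ℕ := hi.factorial with hNf
    have hNf0 : ((Nf : ℕ) : 𝓞 K) ≠ 0 := Nat.cast_ne_zero.mpr hi.factorial_pos.ne'
    have hdvdNf : ∀ ω : 𝓞 K, ω ≠ 0 →
        |L * ‖φ (ω : K)‖ - t| ≤ s → ω ∣ ((Nf : ℕ) : 𝓞 K) := by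
      intro ω hω hab
      obtain ⟨h1, h2⟩ := hannulus ω hω hab
      have hω1 : ω ∣ ((Ideal.absNorm (Ideal.span {ω}) : ℕ) : 𝓞 K) :=
        Ideal.mem_span_singleton.mp (Ideal.absNorm_mem _)
      refine hω1.trans (Nat.cast_dvd_cast ?_)
      exact Nat.dvd_factorial (by omega) h2
    haveI hΩfin : Finite {ω : 𝓞 K // ω ≠ 0 ∧
        |L * ‖φ (ω : K)‖ - t| ≤ t ^ ((1 : ℝ) / 3)} := by
      haveI := (elem_dvd_finite_and_card (K := K) hNf0).1
      refine Finite.of_injective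
        (fun ω => (⟨ω.1, hdvdNf ω.1 ω.2.1 ω.2.2⟩ : {d : 𝓞 K // d ∣ ((Nf : ℕ) : 𝓞 K)})) ?_
      intro a b h
      exact Subtype.ext (by simpa using congrArg Subtype.val h)
    haveI := Fintype.ofFinite {ω : 𝓞 K // ω ≠ 0 ∧
        |L * ‖φ (ω : K)‖ - t| ≤ t ^ ((1 : ℝ) / 3)}
    rw [tsum_fintype]
    -- pointwise bound on sigma0
    have hsigma : ∀ ω : {ω : 𝓞 K // ω ≠ 0 ∧
        |L * ‖φ (ω : K)‖ - t| ≤ t ^ ((1 : ℝ) / 3)},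
        sigma0 K (ω : 𝓞 K) ≤ C₀ * B ^ δ := by
      intro ω
      have hω0 : ω.1 ≠ 0 := ω.2.1
      have hspan0 : (Ideal.span {ω.1} : Ideal (𝓞 K)) ≠ 0 := by
        simpa [Ideal.span_singleton_eq_bot] using hω0
      obtain ⟨hfinD, hcardD⟩ := elem_dvd_finite_and_card (K := K) hω0
      have hJ : (Nat.card {J : Ideal (𝓞 K) // J ∣ Ideal.span {ω.1}} : ℝ) ≤
          C₀ * ((Ideal.absNorm (Ideal.span {ω.1}) : ℕ) : ℝ) ^ δ := hC₀ _ hspan0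
      have hnB : ((Ideal.absNorm (Ideal.span {ω.1}) : ℕ) : ℝ) ≤ B := by
        rw [hnormSq]
        have := hannulus ω.1 hω0 ω.2.2
        rw [← hnormSq ω.1]
        exact le_trans (Nat.cast_le.mpr this.2) (Nat.floor_le hB0.le)
      have hpow : ((Ideal.absNorm (Ideal.span {ω.1}) : ℕ) : ℝ) ^ δ ≤ B ^ δ :=
        Real.rpow_le_rpow (Nat.cast_nonneg _) hnB hδ.le
      rw [sigma0, div_le_iff₀ hu0]
      calc (Nat.card {d : 𝓞 K // d ∣ ω.1} : ℝ)
          ≤ (u:ℝ) * (Nat.card {J : Ideal (𝓞 K) // J ∣ Ideal.span {ω.1}} : ℝ) := by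
            exact_mod_cast hcardD
        _ ≤ (u:ℝ) * (C₀ * B ^ δ) := by
            apply mul_le_mul_of_nonneg_left ?_ (le_of_lt hu0)
            exact hJ.trans (mul_le_mul_of_nonneg_left hpow hC₀0.le)
        _ = C₀ * B ^ δ * (u:ℝ) := by ring
    -- counting
    have hhiB : ((hi:ℕ) : ℝ) ≤ B := Nat.floor_le hB0.le
    have hX0 : (0:ℝ) ≤ t ^ ((4:ℝ)/3) := Real.rpow_nonneg ht0.le _
    have hCB0 : (0:ℝ) ≤ C₀ * B ^ δ := mul_nonneg hC₀0.le (Real.rpow_nonneg hB0.le δ)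
    have hUb0 : (0:ℝ) ≤ (u:ℝ) * (C₀ * (((hi:ℝ)^2) : ℝ) ^ δ) :=
      mul_nonneg (Nat.cast_nonneg _)
        (mul_nonneg hC₀0.le (Real.rpow_nonneg (by positivity) δ))
    have hcount := card_le_of_norm_bounds (K := K)
      (P := fun ω : 𝓞 K => ω ≠ 0 ∧ |L * ‖φ (ω : K)‖ - t| ≤ s)
      hlo1 hδ.le hC₀0.le hC₀ (fun ω hω => hannulus ω hω.1 hω.2) hspanNorm
    have hIcc : ((Finset.Icc lo hi).card : ℝ) ≤ (4 / L^2 + 1) * t ^ ((4:ℝ)/3) := by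
      have h4 : (1:ℝ) ≤ t ^ ((4:ℝ)/3) := by
        have := Real.rpow_le_rpow_of_exponent_le ht1 (by norm_num : (0:ℝ) ≤ 4/3)
        rwa [Real.rpow_zero] at this
      have h3 : t * s = t ^ ((4:ℝ)/3) := by
        rw [hs, show (4:ℝ)/3 = 1 + 1/3 by norm_num, Real.rpow_add ht0, Real.rpow_one]
      have h1 : ((Finset.Icc lo hi).card : ℝ) ≤ B - A + 1 := by
        rw [Nat.card_Icc]
        by_cases h : lo ≤ hi
        · rw [Nat.cast_sub (by omega)]
          push_cast
          have hfl : (hi:ℝ) ≤ B := Nat.floor_le hB0.le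
          have hce : A ≤ (lo:ℝ) := Nat.le_ceil A
          linarith
        · rw [show hi + 1 - lo = 0 by omega]
          push_cast
          linarith
      have h2 : B - A + 1 = 4 * (t * s) / L^2 + 1 := by
        rw [hB, hA]
        field_simp
        ring
      rw [h2, h3] at h1
      have hL2 : (0:ℝ) < L^2 := by positivity
      have h5 : (4 / L^2 + 1) * t ^ ((4:ℝ)/3)
          = 4 * t ^ ((4:ℝ)/3) / L^2 + t ^ ((4:ℝ)/3) := by ring
      rw [h5]
      linarith
    have hconst0 : (0:ℝ) ≤ (4 / L^2 + 1) * ((u:ℝ) * C₀^2) := by positivity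
    refine le_trans (Finset.sum_le_card_nsmul Finset.univ _ (C₀ * B ^ δ)
      (fun ω _ => hsigma ω)) ?_
    rw [Finset.card_univ, nsmul_eq_mul]
    refine le_trans (mul_le_mul_of_nonneg_right
      (hcount.trans (mul_le_mul_of_nonneg_right hIcc hUb0)) hCB0) ?_
    calc ((4 / L^2 + 1) * t ^ ((4:ℝ)/3) * ((u:ℝ) * (C₀ * (((hi:ℝ)^2) : ℝ) ^ δ))) *
          (C₀ * B ^ δ)
        ≤ ((4 / L^2 + 1) * t ^ ((4:ℝ)/3) * ((u:ℝ) * (C₀ * (B^2) ^ δ))) * (C₀ * B ^ δ) := by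
          apply mul_le_mul_of_nonneg_right ?_ hCB0
          apply mul_le_mul_of_nonneg_left ?_
            (mul_nonneg (by positivity : (0:ℝ) ≤ 4 / L^2 + 1) hX0)
          apply mul_le_mul_of_nonneg_left ?_ (Nat.cast_nonneg _)
          apply mul_le_mul_of_nonneg_left ?_ hC₀0.le
          exact Real.rpow_le_rpow (by positivity)
            (pow_le_pow_left₀ (Nat.cast_nonneg _) hhiB 2) hδ.le
      _ = ((4 / L^2 + 1) * ((u:ℝ) * C₀^2)) * (t ^ ((4:ℝ)/3) * ((B^2) ^ δ * B ^ δ)) := by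
          ring
      _ ≤ ((4 / L^2 + 1) * ((u:ℝ) * C₀^2)) *
            (t ^ ((4:ℝ)/3) * ((4/L^2) ^ (ε/2) * t ^ ε)) := by
          apply mul_le_mul_of_nonneg_left ?_ hconst0
          apply mul_le_mul_of_nonneg_left ?_ hX0
          have e3 : (B^2) ^ δ * B ^ δ = B ^ (ε/2) := by
            rw [← Real.rpow_natCast B 2, ← Real.rpow_mul hB0.le, ← Real.rpow_add hB0,
              show ((2:ℕ):ℝ) * δ + δ = ε/2 by push_cast; rw [hδdef]; ring]
          rw [e3]
          have hL2 : (0:ℝ) < L^2 := by positivity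
          have hBle : B ≤ 4/L^2 * t^2 := by
            have h5 : (t+s)^2 ≤ 4*t^2 := by nlinarith [mul_pos (sub_pos.mpr hst) (show (0:ℝ) < 3*t+s by linarith)]
            calc B = (t+s)^2/L^2 := by rw [hB]; ring
              _ ≤ (4*t^2)/L^2 := (div_le_div_iff_of_pos_right hL2).mpr h5
              _ = 4/L^2 * t^2 := by ring
          calc B ^ (ε/2) ≤ (4/L^2 * t^2) ^ (ε/2) :=
                Real.rpow_le_rpow hB0.le hBle (by positivity)
            _ = (4/L^2) ^ (ε/2) * (t^2) ^ (ε/2) :=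
                Real.mul_rpow (by positivity) (by positivity)
            _ = (4/L^2) ^ (ε/2) * t ^ ε := by
                rw [← Real.rpow_natCast t 2, ← Real.rpow_mul ht0.le,
                  show ((2:ℕ):ℝ) * (ε/2) = ε by push_cast; ring]
      _ = ((4 / L^2 + 1) * ((u:ℝ) * C₀^2 * (4 / L^2) ^ (ε/2))) *
            (t ^ ((4:ℝ)/3) * t ^ ε) := by ring
      _ = (4 / L^2 + 1) * ((u:ℝ) * C₀^2 * (4 / L^2) ^ (ε/2)) * t ^ ((4:ℝ)/3 + ε) := by
          rw [← Real.rpow_add ht0]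
end

section
/- Absolute convergence of the Eisenstein series on hyperbolic 3-space in the region of convergence: let K be an imaginary quadratic number field with ring of integers O_K ⊂ ℂ. For every z ∈ ℂ, every r > 0 and every real σ > 2, the series ∑_{(c,d) ∈ O_K² ∖ {(0,0)}} ( r / (|cz + d|² + |c|² r²) )^{σ} converges. -/
open Real Complex NumberField Module

open Classical in
lemma ok_summable (K : Type*) [Field K] [NumberField K]
    (h2 : Module.finrank ℚ K = 2) (φ : K →+* ℂ) (him : ∃ x : K, (φ x).im ≠ 0)
    {t : ℝ} (ht : 2 < t) :
    Summable (fun x : 𝓞 K => if x = 0 then (0:ℝ) else ‖φ (x : K)‖ ^ (-t)) := by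
  -- a ℤ-basis of 𝓞 K indexed by `Fin 2`
  have hcard : Fintype.card (Free.ChooseBasisIndex ℤ (𝓞 K)) = 2 := by
    rw [← Module.finrank_eq_card_chooseBasisIndex, RingOfIntegers.rank, h2]
  let e : Free.ChooseBasisIndex ℤ (𝓞 K) ≃ Fin 2 := Fintype.equivFinOfCardEq hcard
  let b : Basis (Fin 2) ℤ (𝓞 K) := (RingOfIntegers.basis K).reindex e
  let v : Fin 2 → ℂ := fun j => φ ((b j : 𝓞 K) : K)
  -- every `φ x` lies in the real span of `v`
  have hmem : ∀ x : K, φ x ∈ Submodule.span ℝ (Set.range v) := by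
    intro x
    let bq : Basis (Fin 2) ℚ K := (integralBasis K).reindex e
    have hbq : ∀ j, bq j = ((b j : 𝓞 K) : K) := by
      intro j
      simp [bq, b, Basis.reindex_apply, integralBasis_apply]
    have hx : x = ∑ j, bq.repr x j • bq j := (bq.sum_repr x).symm
    rw [hx, map_sum]
    refine Submodule.sum_mem _ fun j _ => ?_
    have : φ (bq.repr x j • bq j) = ((bq.repr x j : ℝ)) • v j := by
      rw [Rat.smul_def, map_mul, map_ratCast, hbq]
      simp [v, Complex.real_smul]
    rw [this]
    exact Submodule.smul_mem _ _ (Submodule.subset_span ⟨j, rfl⟩)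
  -- the span is all of ℂ
  have hspan : Submodule.span ℝ (Set.range v) = ⊤ := by
    obtain ⟨x₀, hx₀⟩ := him
    set S := Submodule.span ℝ (Set.range v)
    have h1 : (1 : ℂ) ∈ S := by simpa using hmem 1
    have hx : φ x₀ ∈ S := hmem x₀
    have hli : LinearIndependent ℝ (![(1 : ℂ), φ x₀]) := by
      rw [linearIndependent_fin2]
      constructor
      · simpa using fun h => hx₀ (by simp [h])
      · intro a hcontra
        simp only [Matrix.cons_val_one, Matrix.head_cons, Matrix.cons_val_zero] at hcontra
        have him0 : a * (φ x₀).im = 0 := by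
          have := congrArg Complex.im hcontra
          simpa [Complex.smul_im] using this
        have ha : a = 0 := by
          rcases mul_eq_zero.1 him0 with h | h
          · exact h
          · exact absurd h hx₀
        rw [ha, zero_smul] at hcontra
        exact one_ne_zero hcontra.symm
    have hliS : LinearIndependent ℝ (fun j : Fin 2 => (⟨![(1:ℂ), φ x₀] j, by
        fin_cases j <;> assumption⟩ : S)) := by
      apply LinearIndependent.of_comp S.subtype
      convert hli
      funext j; fin_cases j <;> rfl
    have h2le : 2 ≤ finrank ℝ S := by
      simpa using hliS.fintype_card_le_finrank
    apply Submodule.eq_top_of_finrank_eq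
    have := Submodule.finrank_le S
    rw [Complex.finrank_real_complex] at this ⊢
    omega
  -- the linear map given by `v` is a bijection
  let T : (Fin 2 → ℝ) →ₗ[ℝ] ℂ := Fintype.linearCombination ℝ v
  have hTsurj : Function.Surjective T := by
    rw [← LinearMap.range_eq_top, Fintype.range_linearCombination, hspan]
  have hTinj : Function.Injective T :=
    (LinearMap.injective_iff_surjective_of_finrank_eq_finrank
      (by simp [Complex.finrank_real_complex])).2 hTsurj
  -- continuous linear equivalence and the norm comparison
  let E := (LinearEquiv.ofBijective T ⟨hTinj, hTsurj⟩).toContinuousLinearEquiv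
  set c : ℝ := ‖(E.symm : ℂ →L[ℝ] (Fin 2 → ℝ))‖ + 1 with hc
  have hc0 : 0 < c := by positivity
  have hkey : ∀ x : 𝓞 K, ‖(b.equivFun x : Fin 2 → ℤ)‖ ≤ c * ‖φ (x : K)‖ := by
    intro x
    set w : Fin 2 → ℤ := b.equivFun x with hw
    set vr : Fin 2 → ℝ := fun j => (w j : ℝ) with hvr
    have hTvr : T vr = φ (x : K) := by
      have hx : (x : 𝓞 K) = ∑ j, w j • b j := by
        rw [hw]; exact (b.sum_equivFun x).symm
      have : ((x : 𝓞 K) : K) = ∑ j, w j • ((b j : 𝓞 K) : K) := by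
        rw [hx]; push_cast; simp
      rw [Fintype.linearCombination_apply, this, map_sum]
      refine Finset.sum_congr rfl fun j _ => ?_
      rw [map_zsmul]
      simp [vr, v]
    have h1 : ‖w‖ ≤ ‖vr‖ := by
      rw [pi_norm_le_iff_of_nonneg (norm_nonneg vr)]
      intro i
      calc ‖w i‖ = ‖vr i‖ := (Int.norm_cast_real (w i)).symm
      _ ≤ ‖vr‖ := norm_le_pi_norm vr i
    have h2' : ‖vr‖ ≤ c * ‖T vr‖ := by
      have : vr = E.symm (E vr) := (E.symm_apply_apply vr).symm
      calc ‖vr‖ = ‖E.symm (E vr)‖ := by rw [← this]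
      _ ≤ ‖(E.symm : ℂ →L[ℝ] (Fin 2 → ℝ))‖ * ‖E vr‖ :=
          (E.symm : ℂ →L[ℝ] (Fin 2 → ℝ)).le_opNorm _
      _ ≤ c * ‖E vr‖ := by
          apply mul_le_mul_of_nonneg_right (by rw [hc]; linarith) (norm_nonneg _)
      _ = c * ‖T vr‖ := rfl
    calc ‖w‖ ≤ ‖vr‖ := h1
    _ ≤ c * ‖T vr‖ := h2'
    _ = c * ‖φ (x : K)‖ := by rw [hTvr]
  -- summability by comparison with the ℤ² lattice sum
  have hbase : Summable fun x : 𝓞 K => ‖(b.equivFun x : Fin 2 → ℤ)‖ ^ (-t) :=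
    (EisensteinSeries.summable_one_div_norm_rpow ht).comp_injective b.equivFun.injective
  refine Summable.of_nonneg_of_le ?_ ?_ (hbase.mul_left (c ^ t))
  · intro x
    by_cases h : x = 0 <;> simp [h, Real.rpow_nonneg (norm_nonneg _)]
  · intro x
    by_cases h : x = 0
    · simp only [h, if_pos rfl]
      positivity
    · rw [if_neg h]
      have hx0 : (0:ℝ) < ‖φ (x : K)‖ := by
        rw [norm_pos_iff]
        simp only [ne_eq, map_eq_zero]
        exact fun hh => h (by exact_mod_cast RingOfIntegers.coe_injective (by simpa using hh))
      have hwpos : (0:ℝ) < ‖(b.equivFun x : Fin 2 → ℤ)‖ := by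
        rw [norm_pos_iff]
        simp only [ne_eq, EmbeddingLike.map_eq_zero_iff]
        exact h
      have hdiv : ‖(b.equivFun x : Fin 2 → ℤ)‖ / c ≤ ‖φ (x : K)‖ := by
        rw [div_le_iff₀ hc0, mul_comm]
        exact hkey x
      calc ‖φ (x : K)‖ ^ (-t)
          ≤ (‖(b.equivFun x : Fin 2 → ℤ)‖ / c) ^ (-t) :=
            Real.rpow_le_rpow_of_nonpos (by positivity) hdiv (by linarith)
      _ = c ^ t * ‖(b.equivFun x : Fin 2 → ℤ)‖ ^ (-t) := by
          rw [Real.div_rpow hwpos.le hc0.le, Real.rpow_neg hc0.le]; field_simp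

lemma quad_bound (z : ℂ) (r : ℝ) (hr : 0 < r) :
    ∃ ε > 0, ∀ c d : ℂ,
      ε * (‖c‖ ^ 2 + ‖d‖ ^ 2) ≤
        ‖c * z + d‖ ^ 2 + ‖c‖ ^ 2 * r ^ 2 := by
  set s := ‖z‖ with hs
  have hs0 : 0 ≤ s := norm_nonneg z
  refine ⟨r ^ 2 / (2 * (2 * s ^ 2 + 2 + r ^ 2)), by positivity, fun c d => ?_⟩
  set x := ‖c‖ with hx
  set y := ‖d‖ with hy
  set a := ‖c * z + d‖ with ha
  have hx0 : 0 ≤ x := norm_nonneg c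
  have hy0 : 0 ≤ y := norm_nonneg d
  have ha0 : 0 ≤ a := norm_nonneg _
  have htri : y ≤ a + x * s := by
    have : d = (c * z + d) - c * z := by ring
    calc y = ‖(c * z + d) - c * z‖ := by rw [← this]
    _ ≤ ‖c * z + d‖ + ‖c * z‖ := by
        simpa using norm_sub_le (c * z + d) (c * z)
    _ = a + x * s := by rw [norm_mul]
  have hsq : y ^ 2 ≤ 2 * a ^ 2 + 2 * s ^ 2 * x ^ 2 := by
    nlinarith [sq_nonneg (a - x * s), mul_le_mul htri htri hy0 (by positivity)]
  rw [div_mul_eq_mul_div, div_le_iff₀ (by positivity)]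
  nlinarith [sq_nonneg a, sq_nonneg (x * r), mul_nonneg (sq_nonneg x) (sq_nonneg r),
    mul_nonneg (mul_nonneg (sq_nonneg s) (sq_nonneg x)) (sq_nonneg r),
    mul_nonneg (sq_nonneg a) (sq_nonneg s), mul_nonneg (sq_nonneg a) (sq_nonneg r),
    mul_le_mul_of_nonneg_left hsq (sq_nonneg r)]

open Classical in
/-- Absolute convergence of the Eisenstein series on hyperbolic 3-space in the region of
convergence: for an imaginary quadratic number field `K` with ring of integers `O_K ⊂ ℂ`
(via the embedding `φ`), for every `z ∈ ℂ`, `r > 0` and real `σ > 2`, the series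
`∑_{(c,d) ∈ O_K² ∖ {(0,0)}} (r / (|cz + d|² + |c|² r²))^σ` converges. -/
theorem eisenstein_series_summable (K : Type*) [Field K] [NumberField K]
    (h2 : Module.finrank ℚ K = 2) (φ : K →+* ℂ) (him : ∃ x : K, (φ x).im ≠ 0)
    (z : ℂ) (r : ℝ) (hr : 0 < r) (σ : ℝ) (hσ : 2 < σ) :
    Summable (fun p : {p : 𝓞 K × 𝓞 K // p ≠ (0, 0)} =>
      (r / (‖φ ((p : 𝓞 K × 𝓞 K).1 : K) * z + φ ((p : 𝓞 K × 𝓞 K).2 : K)‖ ^ 2 +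
        ‖φ ((p : 𝓞 K × 𝓞 K).1 : K)‖ ^ 2 * r ^ 2)) ^ σ) := by
  obtain ⟨ε, hε, hquad⟩ := quad_bound z r hr
  have hσ0 : (0:ℝ) < σ := by linarith
  have Sσ : Summable (fun x : 𝓞 K => if x = 0 then (0:ℝ)
      else ‖φ (x : K)‖ ^ (-σ)) := ok_summable K h2 φ him hσ
  have S2σ : Summable (fun x : 𝓞 K => if x = 0 then (0:ℝ)
      else ‖φ (x : K)‖ ^ (-(2 * σ))) := ok_summable K h2 φ him (by linarith)
  have Sf0 : Summable (fun x : 𝓞 K => if x = 0 then (1:ℝ) else 0) := by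
    apply summable_of_ne_finset_zero (s := {(0 : 𝓞 K)})
    intro x hx
    simp only [Finset.mem_singleton] at hx
    simp [hx]
  have hnn : ∀ (t : ℝ) (x : 𝓞 K),
      0 ≤ (if x = 0 then (0:ℝ) else ‖φ (x : K)‖ ^ (-t)) := fun t x => by
    by_cases hx : x = 0 <;> simp [hx, Real.rpow_nonneg (norm_nonneg _)]
  have hf0nn : ∀ x : 𝓞 K, 0 ≤ (if x = 0 then (1:ℝ) else 0) := fun x => by
    by_cases hx : x = 0 <;> simp [hx]
  set C : ℝ := (r / ε) ^ σ with hC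
  have hC0 : 0 ≤ C := by positivity
  set hA : 𝓞 K → ℝ := fun x => if x = 0 then (0:ℝ) else ‖φ (x : K)‖ ^ (-σ) with hhA
  set hB : 𝓞 K → ℝ := fun x => if x = 0 then (0:ℝ)
    else ‖φ (x : K)‖ ^ (-(2 * σ)) with hhB
  set f0 : 𝓞 K → ℝ := fun x => if x = 0 then (1:ℝ) else 0 with hf0
  set G : 𝓞 K × 𝓞 K → ℝ := fun p =>
    C * (hA p.1 * hA p.2 + (f0 p.1 * hB p.2 + hB p.1 * f0 p.2)) with hG
  have SG : Summable G := by
    apply Summable.mul_left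
    exact (Sσ.mul_of_nonneg Sσ (hnn σ) (hnn σ)).add
      ((Sf0.mul_of_nonneg S2σ hf0nn (hnn _)).add (S2σ.mul_of_nonneg Sf0 (hnn _) hf0nn))
  refine Summable.of_nonneg_of_le (fun p => by positivity) ?_
    (SG.comp_injective Subtype.val_injective)
  rintro ⟨⟨c, d⟩, hp⟩
  simp only [Function.comp_apply]
  set X := ‖φ (c : K)‖ with hX
  set Y := ‖φ (d : K)‖ with hY
  set D := ‖φ (c : K) * z + φ (d : K)‖ ^ 2 + X ^ 2 * r ^ 2 with hD
  set N : ℝ := X ^ 2 + Y ^ 2 with hN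
  have hND : ε * N ≤ D := hquad (φ (c : K)) (φ (d : K))
  have hcd : c ≠ 0 ∨ d ≠ 0 := by
    by_contra hcon
    push_neg at hcon
    exact hp (by simp [hcon.1, hcon.2])
  have hphi : ∀ x : 𝓞 K, x ≠ 0 → 0 < ‖φ (x : K)‖ := by
    intro x hx
    rw [norm_pos_iff]
    simp only [ne_eq, map_eq_zero]
    exact fun hh => hx (by exact_mod_cast RingOfIntegers.coe_injective (by simpa using hh))
  have hN0 : 0 < N := by
    rcases hcd with hc | hd
    · have := hphi c hc; positivity
    · have := hphi d hd; positivity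
  have hD0 : 0 < D := lt_of_lt_of_le (by positivity) hND
  have step1 : (r / D) ^ σ ≤ C * N ^ (-σ) := by
    have h1 : (r / D) ^ σ ≤ (r / (ε * N)) ^ σ := by
      apply Real.rpow_le_rpow (by positivity) ?_ hσ0.le
      exact (div_le_div_iff_of_pos_left hr (by positivity) (by positivity)).2 hND
    refine h1.trans_eq ?_
    rw [div_mul_eq_div_div, Real.div_rpow (by positivity) hN0.le, Real.rpow_neg hN0.le,
      div_eq_mul_inv]
  have step2 : N ^ (-σ) ≤ hA c * hA d + (f0 c * hB d + hB c * f0 d) := by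
    by_cases hc : c = 0
    · have hd : d ≠ 0 := hcd.resolve_left (not_not_intro hc)
      have hX0 : X = 0 := by simp [hX, hc]
      have hY0 : 0 < Y := hphi d hd
      have : N ^ (-σ) = Y ^ (-(2 * σ)) := by
        rw [hN, hX0]
        rw [show (0:ℝ) ^ 2 + Y ^ 2 = Y ^ 2 by ring, ← Real.rpow_natCast Y 2,
          ← Real.rpow_mul hY0.le]
        norm_num
      rw [this]
      simp only [hhA, hhB, hf0, if_pos hc, if_neg hd]
      nlinarith [Real.rpow_nonneg hY0.le (-(2*σ))]
    · by_cases hd : d = 0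
      · have hX0 : 0 < X := hphi c hc
        have : N ^ (-σ) = X ^ (-(2 * σ)) := by
          rw [hN, show Y = 0 by simp [hY, hd]]
          rw [show X ^ 2 + (0:ℝ) ^ 2 = X ^ 2 by ring, ← Real.rpow_natCast X 2,
            ← Real.rpow_mul hX0.le]
          norm_num
        rw [this]
        simp only [hhA, hhB, hf0, if_pos hd, if_neg hc]
        nlinarith [Real.rpow_nonneg hX0.le (-(2*σ))]
      · have hX0 : 0 < X := hphi c hc
        have hY0 : 0 < Y := hphi d hd
        have hXY : X * Y ≤ N := by nlinarith [sq_nonneg (X - Y)]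
        have h1 : N ^ (-σ) ≤ (X * Y) ^ (-σ) :=
          Real.rpow_le_rpow_of_nonpos (by positivity) hXY (by linarith)
        have h2 : (X * Y) ^ (-σ) = X ^ (-σ) * Y ^ (-σ) := Real.mul_rpow hX0.le hY0.le
        simp only [hhA, hhB, hf0, if_neg hc, if_neg hd]
        have hnn1 : 0 ≤ ‖φ (c:K)‖ ^ (-(2*σ)) * (0:ℝ) := by simp
        calc N ^ (-σ) ≤ X ^ (-σ) * Y ^ (-σ) := h2 ▸ h1
        _ ≤ X ^ (-σ) * Y ^ (-σ) + ((0:ℝ) * ‖φ (d:K)‖ ^ (-(2*σ))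
              + ‖φ (c:K)‖ ^ (-(2*σ)) * 0) := by simp
  calc (r / D) ^ σ ≤ C * N ^ (-σ) := step1
  _ ≤ G (c, d) := by
      rw [hG]
      exact mul_le_mul_of_nonneg_left step2 hC0
end
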